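/- arXiv:1909.08731 — 8 statements merged into one kernel-verified Lean document; each statement's English description precedes it below -/
import Mathlib

section
/- Let C be a positive integer with C ≡ 0 (mod 4). Define Γ₁* = Γ¹(C) ∩ Γ₀(2), Γ₂* = Γ¹(C/2) ∩ Γ⁰(C), and Γ₃* = Γ₀(2) ∪ Γ¹(C). Then the set G = Γ₁* ∪ (Γ₂* \ Γ₃*) is a subgroup of SL₂(ℤ); moreover it contains the principal congruence subgroup Γ(C), so G is a congruence subgroup of SL₂(ℤ). -/
abbrev SL2Z := Matrix.SpecialLinearGroup (Fin 2) ℤ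

/-- `Γ₀(N)`: lower-left entry divisible by `N`. -/
def myGamma0 (N : ℕ) : Set SL2Z := {g | (N:ℤ) ∣ g.1 1 0}

/-- `Γ⁰(N)`: upper-right entry divisible by `N`. -/
def myGammaUp0 (N : ℕ) : Set SL2Z := {g | (N:ℤ) ∣ g.1 0 1}

/-- `Γ¹(N)`: upper-right entry divisible by `N`, diagonal entries `≡ 1 (mod N)`. -/
def myGammaUp1 (N : ℕ) : Set SL2Z :=
  {g | (N:ℤ) ∣ g.1 0 1 ∧ (N:ℤ) ∣ (g.1 0 0 - 1) ∧ (N:ℤ) ∣ (g.1 1 1 - 1)}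

/-- The principal congruence subgroup `Γ(N)` as a set. -/
def myGammaFull (N : ℕ) : Set SL2Z :=
  {g | (N:ℤ) ∣ g.1 0 1 ∧ (N:ℤ) ∣ g.1 1 0 ∧ (N:ℤ) ∣ (g.1 0 0 - 1) ∧ (N:ℤ) ∣ (g.1 1 1 - 1)}

/-- The group `A_α` from the paper, depending on `a` and `C`. -/
def Aalpha (a : ℤ) (C : ℕ) : Set SL2Z :=
  if a = 0 ∨ a = 2 then myGammaUp1 (Nat.lcm 2 C)
  else if ¬ (4 ∣ C) then myGammaUp1 (Nat.lcm 2 C) ∩ myGamma0 2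
  else (myGammaUp1 C ∩ myGamma0 2) ∪
    ((myGammaUp1 (C/2) ∩ myGammaUp0 C) \ (myGamma0 2 ∪ myGammaUp1 C))


private lemma int1 (K a b c d u v : ℤ) (hdet : a*d - b*c = 1)
    (hb : b = 4*K*u) (ha : a = 1 + 2*K*c + 4*K*v) :
    ∃ w, d = 1 - 2*K*c + 4*K*w := by
  subst hb ha
  exact ⟨K*c^2*d + 2*K*c*v*d - 2*K*u*c^2 + u*c - v*d,
    by linear_combination (1 - 2*K*c)*hdet⟩

private lemma int2 (K a1 b1 c1 d1 a2 c2 u1 v1 w1 v2 : ℤ)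
    (hb1 : b1 = 4*K*u1) (ha1 : a1 = 1+2*K*c1+4*K*v1) (hd1 : d1 = 1-2*K*c1+4*K*w1)
    (ha2 : a2 = 1+2*K*c2+4*K*v2) :
    ∃ w, a1*a2 + b1*c2 - 1 - 2*K*(c1*a2 + d1*c2) = 4*K*w := by
  subst hb1 ha1 hd1 ha2
  exact ⟨v1+v2+2*K*v1*c2+4*K*v1*v2+u1*c2+K*c1*c2-2*K*w1*c2, by ring⟩

private lemma int3 (K a b c d u v : ℤ) (hdet : a*d - b*c = 1)
    (hb : b = 4*K*u) (ha : a = 1 + 4*K*v) :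
    d - 1 = 4*K*(u*c - v*d) := by
  subst hb ha; linear_combination hdet

/-- For `C ≡ 0 (mod 4)`, the set
`G = (Γ¹(C) ∩ Γ₀(2)) ∪ ((Γ¹(C/2) ∩ Γ⁰(C)) \ (Γ₀(2) ∪ Γ¹(C)))`
is (the carrier of) a subgroup of `SL₂(ℤ)` which contains the principal
congruence subgroup `Γ(C)`; in particular it is a congruence subgroup. -/
theorem stmt0 (C : ℕ) (hC : 0 < C) (h4 : C % 4 = 0) :
    ∃ H : Subgroup SL2Z,
      (H : Set SL2Z) =
        (myGammaUp1 C ∩ myGamma0 2) ∪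
          ((myGammaUp1 (C/2) ∩ myGammaUp0 C) \ (myGamma0 2 ∪ myGammaUp1 C)) ∧
      myGammaFull C ⊆ (H : Set SL2Z) := by
  obtain ⟨k, rfl⟩ : ∃ k, C = 4 * k := ⟨C/4, (Nat.mul_div_cancel' (Nat.dvd_of_mod_eq_zero h4)).symm⟩
  have hk0 : 0 < k := by omega
  set K : ℤ := (k:ℤ) with hKdef
  have hK0 : K ≠ 0 := by positivity
  have hdiv : 4*k/2 = 2*k := by omega
  set S : Set SL2Z :=
    {g : SL2Z | (4*K) ∣ g.1 0 1 ∧ (4*K) ∣ (g.1 0 0 - 1 - 2*K * g.1 1 0)} with hSdef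
  -- derived congruence for the lower-right entry
  have dkey : ∀ g : SL2Z, g ∈ S →
      ∃ w, g.1 1 1 = 1 - 2*K*(g.1 1 0) + 4*K*w := by
    rintro g ⟨⟨u, hu⟩, ⟨v, hv⟩⟩
    have hdet := g.2; rw [Matrix.det_fin_two] at hdet
    exact int1 K _ _ _ _ u v hdet hu (by linarith)
  refine ⟨{ carrier := S
            mul_mem' := ?_
            one_mem' := ?_
            inv_mem' := ?_ }, ?_, ?_⟩
  · rintro g h hg hh
    obtain ⟨w1, hw1⟩ := dkey g hg
    obtain ⟨⟨u1, hu1⟩, ⟨v1, hv1⟩⟩ := hg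
    obtain ⟨⟨u2, hu2⟩, ⟨v2, hv2⟩⟩ := hh
    have e01 : (g*h).1 0 1 = g.1 0 0 * h.1 0 1 + g.1 0 1 * h.1 1 1 := by
      simp [Matrix.mul_apply, Fin.sum_univ_two]
    have e00 : (g*h).1 0 0 = g.1 0 0 * h.1 0 0 + g.1 0 1 * h.1 1 0 := by
      simp [Matrix.mul_apply, Fin.sum_univ_two]
    have e10 : (g*h).1 1 0 = g.1 1 0 * h.1 0 0 + g.1 1 1 * h.1 1 0 := by
      simp [Matrix.mul_apply, Fin.sum_univ_two]
    constructor
    · rw [e01]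
      exact ⟨g.1 0 0 * u2 + u1 * h.1 1 1, by rw [hu1, hu2]; ring⟩
    · rw [e00, e10]
      obtain ⟨w, hw⟩ := int2 K (g.1 0 0) (g.1 0 1) (g.1 1 0) (g.1 1 1)
        (h.1 0 0) (h.1 1 0) u1 v1 w1 v2 hu1 (by linarith) hw1 (by linarith)
      exact ⟨w, hw⟩
  · show (1:SL2Z) ∈ S
    refine ⟨⟨0, by simp⟩, ⟨0, by simp⟩⟩
  · rintro g hg
    obtain ⟨w1, hw1⟩ := dkey g hg
    obtain ⟨⟨u, hu⟩, ⟨v, hv⟩⟩ := hg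
    have e01 : (g⁻¹).1 0 1 = - g.1 0 1 := by
      simp [Matrix.SpecialLinearGroup.SL2_inv_expl]
    have e00 : (g⁻¹).1 0 0 = g.1 1 1 := by
      simp [Matrix.SpecialLinearGroup.SL2_inv_expl]
    have e10 : (g⁻¹).1 1 0 = - g.1 1 0 := by
      simp [Matrix.SpecialLinearGroup.SL2_inv_expl]
    refine ⟨by rw [e01]; exact ⟨-u, by rw [hu]; ring⟩, ?_⟩
    rw [e00, e10]
    exact ⟨w1, by linear_combination hw1⟩
  · -- set equality
    show S = _
    ext g
    have hdet := g.2; rw [Matrix.det_fin_two] at hdet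
    simp only [hSdef, hdiv, myGammaUp1, myGamma0, myGammaUp0, Set.mem_union,
      Set.mem_inter_iff, Set.mem_diff, Set.mem_setOf_eq, not_or]
    push_cast
    constructor
    · intro hg
      obtain ⟨w1, hw1⟩ := dkey g hg
      obtain ⟨⟨u, hu⟩, ⟨v, hv⟩⟩ := hg
      rcases Int.even_or_odd (g.1 1 0) with ⟨m, hm⟩ | ⟨m, hm⟩
      · left
        refine ⟨⟨⟨u, hu⟩, ⟨m + v, by linear_combination hv + 2*K*hm⟩,
          ⟨w1 - m, by linear_combination hw1 - 2*K*hm⟩⟩, ⟨m, by omega⟩⟩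
      · right
        refine ⟨⟨⟨⟨2*u, by rw [hu]; ring⟩, ⟨g.1 1 0 + 2*v, by linear_combination hv⟩,
          ⟨2*w1 - g.1 1 0, by linear_combination hw1⟩⟩, ⟨u, hu⟩⟩, ?_, ?_⟩
        · rintro ⟨t, ht⟩; omega
        · rintro ⟨-, ⟨t, ht⟩, -⟩
          have h0 : 2*K*(g.1 1 0 - 2*(t - v)) = 0 := by linear_combination ht - hv
          rcases mul_eq_zero.mp h0 with h1 | h1
          · exact absurd h1 (by simp [hK0])
          · omega
    · rintro (⟨⟨hb1, ⟨t, ht⟩, hd1⟩, ⟨m, hm⟩⟩ | ⟨⟨⟨hb1, ⟨v, hv2⟩, hd1⟩, ⟨u, hu⟩⟩, hcodd, hnot⟩)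
      · exact ⟨hb1, ⟨t - m, by linear_combination ht - 2*K*hm⟩⟩
      · refine ⟨⟨u, hu⟩, ?_⟩
        rcases Int.even_or_odd v with ⟨t, htv⟩ | ⟨t, htv⟩
        · exfalso
          have ha4 : g.1 0 0 = 1 + 4*K*t := by linear_combination hv2 + 2*K*htv
          have hd4 := int3 K _ _ _ _ u t hdet hu ha4
          exact hnot ⟨⟨u, hu⟩, ⟨t, by linarith⟩, ⟨u*(g.1 1 0) - t*(g.1 1 1), by linarith⟩⟩
        · obtain ⟨s, hs⟩ : ∃ s, g.1 1 0 = 2*s + 1 := ⟨g.1 1 0 / 2, by omega⟩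
          exact ⟨t - s, by linear_combination hv2 + 2*K*htv - 2*K*hs⟩
  · -- Γ(C) ⊆ S
    rintro g ⟨hb, ⟨s, hs⟩, ⟨t, ht⟩, hd⟩
    have hb' : (4*K) ∣ g.1 0 1 := by exact_mod_cast hb
    refine ⟨hb', ⟨t - 2*K*s, ?_⟩⟩
    have hs' : g.1 1 0 = 4*K*s := by exact_mod_cast hs
    have ht' : g.1 0 0 - 1 = 4*K*t := by exact_mod_cast ht
    linear_combination ht' - 2*K*hs'
end

section
/- Fix integers A, a and a positive integer C with 0 ≤ a ≤ 3 and gcd(A,C) = 1, and let τ ∈ ℍ. Set u_τ = (A/C)τ + a/2 and v_τ = τ/2. Then both x̃_{γ,τ} − u_τ ∈ ℤτ + ℤ for x = u and x̃_{γ,τ} − v_τ ∈ ℤτ + ℤ for x = v hold if and only if γ ∈ A_α. -/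
lemma odd_mul_dvd (A x : ℤ) (hA : ¬ (2:ℤ) ∣ A) : (2:ℤ) ∣ A * x ↔ (2:ℤ) ∣ x := by
  constructor
  · intro h
    exact ((Int.prime_two.dvd_mul).mp h).resolve_left hA
  · exact fun h => Dvd.dvd.mul_left h A

lemma two_dvd_comb (A a e r : ℤ) (hA : ¬ (2:ℤ) ∣ A) (ha : ¬ (2:ℤ) ∣ a) :
    ((2:ℤ) ∣ (A*e + a*r)) ↔ ((2:ℤ) ∣ e ↔ (2:ℤ) ∣ r) := by
  rw [← even_iff_two_dvd, Int.even_add, even_iff_two_dvd, even_iff_two_dvd,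
    odd_mul_dvd A e hA, odd_mul_dvd a r ha]

lemma lcm_dvd_int (C : ℕ) (x : ℤ) : ((Nat.lcm 2 C : ℕ) : ℤ) ∣ x ↔ (2:ℤ) ∣ x ∧ (C:ℤ) ∣ x := by
  rw [Int.natCast_dvd, show Nat.lcm 2 C = lcm 2 C from rfl, lcm_dvd_iff,
    ← Int.natCast_dvd, ← Int.natCast_dvd]
  norm_num

lemma odd_dvd_of_dvd_two_mul (m x : ℤ) (hm : ¬ (2:ℤ) ∣ m) (h : m ∣ 2 * x) : m ∣ x := by
  have hc : IsCoprime m (2:ℤ) := ((Int.prime_two.coprime_iff_not_dvd).mpr hm).symm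
  exact hc.dvd_of_dvd_mul_left h

/-- If `¬ 4 ∣ C`, `2 ∣ x` and `C ∣ 2x`, then `C ∣ x`. -/
lemma helper_no4 (C x : ℤ) (hC4 : ¬ (4:ℤ) ∣ C) (hx2 : (2:ℤ) ∣ x) (h : C ∣ 2*x) : C ∣ x := by
  by_cases hc2 : (2:ℤ) ∣ C
  · obtain ⟨C', hC'⟩ := hc2
    have hC'odd : ¬ (2:ℤ) ∣ C' := by
      rintro ⟨u, hu⟩
      exact hC4 ⟨u, by omega⟩
    obtain ⟨t, ht⟩ := hx2
    subst ht
    subst hC'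
    have h1 : (2:ℤ) * C' ∣ 2 * (2*t) := h
    have h2 : C' ∣ 2*t := (mul_dvd_mul_iff_left (by norm_num : (2:ℤ) ≠ 0)).mp h1
    have h3 : C' ∣ t := odd_dvd_of_dvd_two_mul C' t hC'odd h2
    obtain ⟨u, hu⟩ := h3
    exact ⟨u, by rw [hu]; ring⟩
  · exact odd_dvd_of_dvd_two_mul C x hc2 h

lemma arith (A a : ℤ) (C : ℕ) (hC : 0 < C) (ha : 0 ≤ a) (ha' : a ≤ 3)
    (hgcd : Int.gcd A (C:ℤ) = 1) (γ : SL2Z) :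
    ((2:ℤ) ∣ (γ.1 0 0 - 1) ∧ (2:ℤ) ∣ γ.1 0 1 ∧
     (2*(C:ℤ)) ∣ (2*A*(γ.1 0 0 - 1) + a*(C:ℤ)*(γ.1 1 0)) ∧
     (2*(C:ℤ)) ∣ (2*A*(γ.1 0 1) + a*(C:ℤ)*(γ.1 1 1 - 1)))
    ↔ γ ∈ Aalpha a C := by
  obtain ⟨P, Q, R, S, hP, hQ, hR, hS⟩ :
      ∃ P Q R S : ℤ, γ.1 0 0 = P ∧ γ.1 0 1 = Q ∧ γ.1 1 0 = R ∧ γ.1 1 1 = S :=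
    ⟨_, _, _, _, rfl, rfl, rfl, rfl⟩
  have hdet : P * S - Q * R = 1 := by
    have h := γ.2
    rw [Matrix.det_fin_two, hP, hQ, hR, hS] at h
    exact h
  have hCz : (C:ℤ) ≠ 0 := by exact_mod_cast hC.ne'
  have hcop : IsCoprime A (C:ℤ) := Int.isCoprime_iff_gcd_eq_one.mpr hgcd
  have hcop' : IsCoprime (C:ℤ) A := hcop.symm
  have hder : ∀ d : ℤ, d ∣ (P - 1) → d ∣ Q → d ∣ (S - 1) := by
    intro d h1 h2
    have hds : S - 1 = Q*R - (P-1)*S := by linear_combination hdet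
    rw [hds]
    exact dvd_sub (h2.mul_right R) (h1.mul_right S)
  rw [hP, hQ, hR, hS]
  by_cases hae : a = 0 ∨ a = 2
  · -- a even
    obtain ⟨a', rfl⟩ : ∃ a', a = 2*a' := by
      rcases hae with rfl | rfl
      exacts [⟨0, rfl⟩, ⟨1, rfl⟩]
    rw [Aalpha, if_pos hae]
    simp only [myGammaUp1, Set.mem_setOf_eq, hP, hQ, hR, hS, lcm_dvd_int]
    constructor
    · rintro ⟨h1, h2, h3, h4⟩
      have hd1 : (2*(C:ℤ)) ∣ (2*a')*(C:ℤ)*R := ⟨a'*R, by ring⟩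
      have hd2 : (2*(C:ℤ)) ∣ (2*a')*(C:ℤ)*(S-1) := ⟨a'*(S-1), by ring⟩
      have h5 : (2*(C:ℤ)) ∣ 2*((A*(P-1))) := by
        have := dvd_sub h3 hd1
        have he : 2*A*(P-1) + 2*a'*(C:ℤ)*R - 2*a'*(C:ℤ)*R = 2*(A*(P-1)) := by ring
        rwa [he] at this
      have h6 : (2*(C:ℤ)) ∣ 2*((A*Q)) := by
        have := dvd_sub h4 hd2
        have he : 2*A*Q + 2*a'*(C:ℤ)*(S-1) - 2*a'*(C:ℤ)*(S-1) = 2*(A*Q) := by ring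
        rwa [he] at this
      have hpC : (C:ℤ) ∣ (P-1) :=
        hcop'.dvd_of_dvd_mul_left ((mul_dvd_mul_iff_left (by norm_num : (2:ℤ) ≠ 0)).mp h5)
      have hqC : (C:ℤ) ∣ Q :=
        hcop'.dvd_of_dvd_mul_left ((mul_dvd_mul_iff_left (by norm_num : (2:ℤ) ≠ 0)).mp h6)
      exact ⟨⟨h2, hqC⟩, ⟨h1, hpC⟩, ⟨hder 2 h1 h2, hder (C:ℤ) hpC hqC⟩⟩
    · rintro ⟨⟨hq2, hqC⟩, ⟨hp2, hpC⟩, ⟨hs2, hsC⟩⟩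
      obtain ⟨t, ht⟩ := hpC
      obtain ⟨w, hw⟩ := hqC
      obtain ⟨v, hv⟩ := hs2
      exact ⟨hp2, hq2, ⟨A*t + a'*R, by rw [ht]; ring⟩, ⟨A*w + 2*a'*v, by rw [hw, hv]; ring⟩⟩
  · have hao : ¬ (2:ℤ) ∣ a := by omega
    by_cases h4C : (4:ℕ) ∣ C
    · -- 4 ∣ C
      obtain ⟨Cq, hCq⟩ := id h4C
      have hCqpos : 0 < Cq := by omega
      have hC2 : C/2 = 2*Cq := by omega
      have hCz2 : (C:ℤ) = 2*(2*(Cq:ℤ)) := by push_cast [hCq]; ring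
      have hA : ¬ (2:ℤ) ∣ A := by
        intro h2A
        have h2C : (2:ℤ) ∣ (C:ℤ) := ⟨2*(Cq:ℤ), hCz2⟩
        have hh := Int.dvd_gcd h2A h2C
        rw [hgcd] at hh
        norm_num at hh
      rw [Aalpha, if_neg hae, if_neg (not_not_intro h4C), hC2]
      simp only [Set.mem_union, Set.mem_inter_iff, Set.mem_diff, myGammaUp1, myGamma0,
        myGammaUp0, Set.mem_setOf_eq, hP, hQ, hR, hS]
      push_cast
      set D : ℤ := 2*(Cq:ℤ) with hD
      have hDne : D ≠ 0 := by rw [hD]; positivity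
      have hDeven : (2:ℤ) ∣ D := ⟨(Cq:ℤ), hD⟩
      have h2Dne : (2*D : ℤ) ≠ 0 := mul_ne_zero two_ne_zero hDne
      constructor
      · rintro ⟨h1, h2, h3, h4⟩
        have hc3 : (C:ℤ) ∣ A*(2*(P-1)) := by
          have h3' := dvd_trans (⟨2, by ring⟩ : (C:ℤ) ∣ 2*(C:ℤ)) h3
          have hh := dvd_sub h3' (⟨a*R, by ring⟩ : (C:ℤ) ∣ a*(C:ℤ)*R)
          have he : 2*A*(P-1) + a*(C:ℤ)*R - a*(C:ℤ)*R = A*(2*(P-1)) := by ring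
          rwa [he] at hh
        have hc4 : (C:ℤ) ∣ A*(2*Q) := by
          have h4' := dvd_trans (⟨2, by ring⟩ : (C:ℤ) ∣ 2*(C:ℤ)) h4
          have hh := dvd_sub h4' (⟨a*(S-1), by ring⟩ : (C:ℤ) ∣ a*(C:ℤ)*(S-1))
          have he : 2*A*Q + a*(C:ℤ)*(S-1) - a*(C:ℤ)*(S-1) = A*(2*Q) := by ring
          rwa [he] at hh
        have hpD : D ∣ (P-1) := by
          have hh := hcop'.dvd_of_dvd_mul_left hc3
          rw [hCz2] at hh
          exact (mul_dvd_mul_iff_left (two_ne_zero : (2:ℤ) ≠ 0)).mp hh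
        have hqD : D ∣ Q := by
          have hh := hcop'.dvd_of_dvd_mul_left hc4
          rw [hCz2] at hh
          exact (mul_dvd_mul_iff_left (two_ne_zero : (2:ℤ) ≠ 0)).mp hh
        have hsD : D ∣ (S-1) := hder D hpD hqD
        obtain ⟨e, he⟩ := id hpD
        obtain ⟨f, hf⟩ := id hqD
        have h3' : (2:ℤ) ∣ A*e + a*R := by
          have heq : 2*A*(P-1) + a*(C:ℤ)*R = (2*D) * (A*e + a*R) := by rw [he, hCz2]; ring
          have heq2 : 2*(C:ℤ) = (2*D) * 2 := by rw [hCz2]; ring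
          rw [heq, heq2] at h3
          exact (mul_dvd_mul_iff_left h2Dne).mp h3
        have h4' : (2:ℤ) ∣ A*f + a*(S-1) := by
          have heq : 2*A*Q + a*(C:ℤ)*(S-1) = (2*D) * (A*f + a*(S-1)) := by rw [hf, hCz2]; ring
          have heq2 : 2*(C:ℤ) = (2*D) * 2 := by rw [hCz2]; ring
          rw [heq, heq2] at h4
          exact (mul_dvd_mul_iff_left h2Dne).mp h4
        have hs2 : (2:ℤ) ∣ (S-1) := dvd_trans hDeven hsD
        have hf2 : (2:ℤ) ∣ f := by
          have hAf : (2:ℤ) ∣ A*f := by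
            obtain ⟨u, hu⟩ := hs2
            obtain ⟨t, ht⟩ := h4'
            exact ⟨t - a*u, by linear_combination ht - a*hu⟩
          exact (odd_mul_dvd A f hA).mp hAf
        have hqC : (C:ℤ) ∣ Q := by
          obtain ⟨f', hf'⟩ := hf2
          exact ⟨f', by rw [hf, hf', hCz2]; ring⟩
        have hiff : ((2:ℤ) ∣ e ↔ (2:ℤ) ∣ R) := (two_dvd_comb A a e R hA hao).mp h3'
        by_cases hr2 : (2:ℤ) ∣ R
        · obtain ⟨e', he'⟩ := hiff.mpr hr2
          have hpC : (C:ℤ) ∣ (P-1) := ⟨e', by rw [he, he', hCz2]; ring⟩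
          exact Or.inl ⟨⟨hqC, hpC, hder (C:ℤ) hpC hqC⟩, hr2⟩
        · have he2 : ¬ (2:ℤ) ∣ e := fun h => hr2 (hiff.mp h)
          refine Or.inr ⟨⟨⟨hqD, hpD, hsD⟩, hqC⟩, ?_⟩
          rintro (h | ⟨_, hpC, _⟩)
          · exact hr2 h
          · obtain ⟨t, ht⟩ := hpC
            apply he2
            have heq : D*e = D*(2*t) := by rw [← he, ht, hCz2]; ring
            exact ⟨t, mul_left_cancel₀ hDne heq⟩
      · rintro (⟨⟨hqC, hpC, hsC⟩, hr2⟩ | ⟨⟨⟨hqD, hpD, hsD⟩, hqC⟩, hnot⟩)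
        · have h2C : (2:ℤ) ∣ (C:ℤ) := ⟨D, hCz2⟩
          obtain ⟨t, ht⟩ := hpC
          obtain ⟨w, hw⟩ := hqC
          obtain ⟨r', hr'⟩ := hr2
          obtain ⟨u, hu⟩ : (2:ℤ) ∣ (S-1) := dvd_trans h2C hsC
          exact ⟨dvd_trans h2C ⟨t, ht⟩, dvd_trans h2C ⟨w, hw⟩,
            ⟨A*t + a*r', by rw [ht, hr']; ring⟩,
            ⟨A*w + a*u, by rw [hw, hu]; ring⟩⟩
        · have hr2 : ¬ (2:ℤ) ∣ R := fun h => hnot (Or.inl h)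
          have hpnC : ¬ (C:ℤ) ∣ (P-1) := fun h => hnot (Or.inr ⟨hqC, h, hder (C:ℤ) h hqC⟩)
          obtain ⟨e, he⟩ := id hpD
          obtain ⟨f, hf⟩ := id hqD
          obtain ⟨g, hg⟩ := id hsD
          have he2 : ¬ (2:ℤ) ∣ e := by
            rintro ⟨e', he'⟩
            exact hpnC ⟨e', by rw [he, he', hCz2]; ring⟩
          have h1 : (2:ℤ) ∣ (P-1) := ⟨(Cq:ℤ)*e, by rw [he, hD]; ring⟩
          have h2 : (2:ℤ) ∣ Q := ⟨(Cq:ℤ)*f, by rw [hf, hD]; ring⟩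
          refine ⟨h1, h2, ?_, ?_⟩
          · have hsum : (2:ℤ) ∣ A*e + a*R :=
              (two_dvd_comb A a e R hA hao).mpr (iff_of_false he2 hr2)
            obtain ⟨t, ht⟩ := hsum
            exact ⟨t, by rw [hCz2, he]; linear_combination (2*D)*ht⟩
          · have hf2 : (2:ℤ) ∣ f := by
              obtain ⟨w, hw⟩ := hqC
              have heq : D*f = D*(2*w) := by rw [← hf, hw, hCz2]; ring
              exact ⟨w, mul_left_cancel₀ hDne heq⟩
            have hs2 : (2:ℤ) ∣ (S-1) := dvd_trans hDeven ⟨g, hg⟩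
            have hsum : (2:ℤ) ∣ A*f + a*(S-1) :=
              dvd_add ((odd_mul_dvd A f hA).mpr hf2) (hs2.mul_left a)
            obtain ⟨t, ht⟩ := hsum
            exact ⟨t, by rw [hCz2, hf]; linear_combination (2*D)*ht⟩
    · -- ¬ 4 ∣ C
      have h4C' : ¬ (4:ℤ) ∣ (C:ℤ) := by exact_mod_cast h4C
      rw [Aalpha, if_neg hae, if_pos h4C]
      simp only [Set.mem_inter_iff, myGammaUp1, myGamma0, Set.mem_setOf_eq, hP, hQ, hR, hS,
        lcm_dvd_int]
      constructor
      · rintro ⟨h1, h2, h3, h4⟩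
        -- C ∣ 2(P-1)
        have hc3 : (C:ℤ) ∣ 2*A*(P-1) + a*(C:ℤ)*R := dvd_trans (⟨2, by ring⟩ : (C:ℤ) ∣ 2*(C:ℤ)) h3
        have hc4 : (C:ℤ) ∣ 2*A*Q + a*(C:ℤ)*(S-1) := dvd_trans (⟨2, by ring⟩ : (C:ℤ) ∣ 2*(C:ℤ)) h4
        have hp2C : (C:ℤ) ∣ 2*(P-1) := by
          have hsub : (C:ℤ) ∣ A*(2*(P-1)) := by
            have := dvd_sub hc3 (⟨a*R, by ring⟩ : (C:ℤ) ∣ a*(C:ℤ)*R)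
            have he : 2*A*(P-1) + a*(C:ℤ)*R - a*(C:ℤ)*R = A*(2*(P-1)) := by ring
            rwa [he] at this
          exact hcop'.dvd_of_dvd_mul_left hsub
        have hq2C : (C:ℤ) ∣ 2*Q := by
          have hsub : (C:ℤ) ∣ A*(2*Q) := by
            have := dvd_sub hc4 (⟨a*(S-1), by ring⟩ : (C:ℤ) ∣ a*(C:ℤ)*(S-1))
            have he : 2*A*Q + a*(C:ℤ)*(S-1) - a*(C:ℤ)*(S-1) = A*(2*Q) := by ring
            rwa [he] at this
          exact hcop'.dvd_of_dvd_mul_left hsub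
        have hpC : (C:ℤ) ∣ (P-1) := helper_no4 _ _ h4C' h1 hp2C
        have hqC : (C:ℤ) ∣ Q := helper_no4 _ _ h4C' h2 hq2C
        -- 2 ∣ R
        have hr2 : (2:ℤ) ∣ R := by
          obtain ⟨t, ht⟩ := hpC
          have hd : (2*(C:ℤ)) ∣ 2*A*(P-1) := ⟨A*t, by rw [ht]; ring⟩
          have har : (2*(C:ℤ)) ∣ a*(C:ℤ)*R := by
            have := dvd_sub h3 hd
            have he : 2*A*(P-1) + a*(C:ℤ)*R - 2*A*(P-1) = a*(C:ℤ)*R := by ring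
            rwa [he] at this
          have : (C:ℤ)*2 ∣ (C:ℤ)*(a*R) := by
            have he1 : (C:ℤ)*2 = 2*(C:ℤ) := by ring
            have he2 : (C:ℤ)*(a*R) = a*(C:ℤ)*R := by ring
            rw [he1, he2]; exact har
          have h2ar : (2:ℤ) ∣ a*R := (mul_dvd_mul_iff_left hCz).mp this
          exact ((Int.prime_two.dvd_mul).mp h2ar).resolve_left hao
        exact ⟨⟨⟨h2, hqC⟩, ⟨h1, hpC⟩, ⟨hder 2 h1 h2, hder (C:ℤ) hpC hqC⟩⟩, hr2⟩
      · rintro ⟨⟨⟨hq2, hqC⟩, ⟨hp2, hpC⟩, ⟨hs2, hsC⟩⟩, hr2⟩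
        obtain ⟨t, ht⟩ := hpC
        obtain ⟨w, hw⟩ := hqC
        obtain ⟨r', hr'⟩ := hr2
        obtain ⟨v, hv⟩ := hs2
        refine ⟨hp2, hq2, ⟨A*t + a*r', by rw [ht, hr']; ring⟩,
          ⟨A*w + a*v, by rw [hw, hv]; ring⟩⟩

lemma combo (τ : ℂ) (hτ : τ.im ≠ 0) (x y : ℝ) (k l : ℤ) :
    ((x:ℂ) * τ + (y:ℂ) = (k:ℂ)*τ + (l:ℂ)) ↔ (x = (k:ℝ) ∧ y = (l:ℝ)) := by
  constructor
  · intro h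
    have h' : ((x - (k:ℝ) : ℝ) : ℂ) * τ = (((l:ℝ) - y : ℝ) : ℂ) := by
      push_cast
      linear_combination h
    have him : (x - (k:ℝ)) * τ.im = 0 := by
      have := congrArg Complex.im h'
      simpa using this
    have hx : x = (k:ℝ) := by
      rcases mul_eq_zero.mp him with h0 | h0
      · linarith
      · exact absurd h0 hτ
    have hy : y = (l:ℝ) := by
      rw [hx, sub_self] at h'
      have h1 := h'.symm
      simp only [Complex.ofReal_zero, zero_mul] at h1
      have h2 : (l:ℝ) - y = 0 := by exact_mod_cast h1
      linarith
    exact ⟨hx, hy⟩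
  · rintro ⟨h1, h2⟩
    rw [h1, h2]; push_cast; ring

lemma real_div_int (n m : ℤ) (hm : (m:ℤ) ≠ 0) : (∃ k : ℤ, (n:ℝ)/(m:ℝ) = (k:ℝ)) ↔ m ∣ n := by
  have hm' : (m:ℝ) ≠ 0 := Int.cast_ne_zero.mpr hm
  constructor
  · rintro ⟨k, hk⟩
    rw [div_eq_iff hm'] at hk
    have : n = k * m := by exact_mod_cast hk
    exact this ▸ dvd_mul_left m k
  · rintro ⟨k, rfl⟩
    exact ⟨k, by push_cast; field_simp⟩

lemma exists_combo (τ : ℂ) (hτ : τ.im ≠ 0) (n₁ n₂ m : ℤ) (hm : m ≠ 0) :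
    (∃ k l : ℤ, (((n₁:ℝ)/(m:ℝ) : ℝ):ℂ) * τ + (((n₂:ℝ)/(m:ℝ) : ℝ):ℂ) = (k:ℂ)*τ + (l:ℂ))
      ↔ (m ∣ n₁ ∧ m ∣ n₂) := by
  constructor
  · rintro ⟨k, l, h⟩
    obtain ⟨h1, h2⟩ := (combo τ hτ _ _ k l).mp h
    exact ⟨(real_div_int n₁ m hm).mp ⟨k, h1⟩, (real_div_int n₂ m hm).mp ⟨l, h2⟩⟩
  · rintro ⟨hd1, hd2⟩
    obtain ⟨k, hk⟩ := (real_div_int n₁ m hm).mpr hd1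
    obtain ⟨l, hl⟩ := (real_div_int n₂ m hm).mpr hd2
    exact ⟨k, l, (combo τ hτ _ _ k l).mpr ⟨hk, hl⟩⟩

/-- with `u_τ = (A/C)τ + a/2`, `v_τ = τ/2`, both
`ũ_{γ,τ} − u_τ ∈ ℤτ + ℤ` and `ṽ_{γ,τ} − v_τ ∈ ℤτ + ℤ` hold iff `γ ∈ A_α`. -/
theorem stmt2 (A a : ℤ) (C : ℕ) (hC : 0 < C) (ha : 0 ≤ a) (ha' : a ≤ 3)
    (hgcd : Int.gcd A (C:ℤ) = 1) (τ : ℂ) (hτ : 0 < τ.im) (γ : SL2Z) :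
    ((∃ k l : ℤ,
        ((A:ℂ)/(C:ℂ) * (((γ.1 0 0 : ℂ) * τ + (γ.1 0 1 : ℂ)) /
            ((γ.1 1 0 : ℂ) * τ + (γ.1 1 1 : ℂ))) + (a:ℂ)/2)
          * ((γ.1 1 0 : ℂ) * τ + (γ.1 1 1 : ℂ))
        - ((A:ℂ)/(C:ℂ) * τ + (a:ℂ)/2) = (k:ℂ) * τ + (l:ℂ)) ∧
     (∃ r s : ℤ,
        ((((γ.1 0 0 : ℂ) * τ + (γ.1 0 1 : ℂ)) /
            ((γ.1 1 0 : ℂ) * τ + (γ.1 1 1 : ℂ))) / 2)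
          * ((γ.1 1 0 : ℂ) * τ + (γ.1 1 1 : ℂ))
        - τ/2 = (r:ℂ) * τ + (s:ℂ)))
    ↔ γ ∈ Aalpha a C := by
  have hτ' : τ.im ≠ 0 := ne_of_gt hτ
  obtain ⟨P, Q, R, S, hP, hQ, hR, hS⟩ :
      ∃ P Q R S : ℤ, γ.1 0 0 = P ∧ γ.1 0 1 = Q ∧ γ.1 1 0 = R ∧ γ.1 1 1 = S :=
    ⟨_, _, _, _, rfl, rfl, rfl, rfl⟩
  have hdet : P * S - Q * R = 1 := by
    have h := γ.2
    rw [Matrix.det_fin_two, hP, hQ, hR, hS] at h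
    exact h
  rw [hP, hQ, hR, hS]
  have hj : (R:ℂ)*τ + (S:ℂ) ≠ 0 := by
    intro h0
    have him : (R:ℝ)*τ.im = 0 := by
      have := congrArg Complex.im h0
      simpa using this
    rcases mul_eq_zero.mp him with h | h
    · have hR0 : R = 0 := by exact_mod_cast h
      rw [hR0] at h0
      simp only [Int.cast_zero, zero_mul, zero_add] at h0
      have hS0 : S = 0 := by exact_mod_cast h0
      rw [hR0, hS0] at hdet
      simp at hdet
    · exact hτ' h
  have hCz : (C:ℤ) ≠ 0 := by exact_mod_cast hC.ne'
  have hCc : (C:ℂ) ≠ 0 := Nat.cast_ne_zero.mpr hC.ne'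
  have h2C : (2*(C:ℤ)) ≠ 0 := mul_ne_zero two_ne_zero hCz
  have hEu : ((A:ℂ)/(C:ℂ) * (((P : ℂ) * τ + (Q : ℂ)) / ((R : ℂ) * τ + (S : ℂ))) + (a:ℂ)/2)
          * ((R : ℂ) * τ + (S : ℂ)) - ((A:ℂ)/(C:ℂ) * τ + (a:ℂ)/2)
      = ((((2*A*(P-1)+a*(C:ℤ)*R : ℤ):ℝ)/((2*(C:ℤ) : ℤ):ℝ) : ℝ):ℂ) * τ
        + ((((2*A*Q+a*(C:ℤ)*(S-1) : ℤ):ℝ)/((2*(C:ℤ) : ℤ):ℝ) : ℝ):ℂ) := by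
    rw [add_mul, mul_assoc, div_mul_cancel₀ _ hj]
    push_cast
    field_simp
    ring
  have hEv : ((((P : ℂ) * τ + (Q : ℂ)) / ((R : ℂ) * τ + (S : ℂ))) / 2)
          * ((R : ℂ) * τ + (S : ℂ)) - τ/2
      = ((((P-1 : ℤ):ℝ)/((2 : ℤ):ℝ) : ℝ):ℂ) * τ + ((((Q : ℤ):ℝ)/((2 : ℤ):ℝ) : ℝ):ℂ) := by
    rw [div_right_comm, div_mul_cancel₀ _ hj]
    push_cast
    field_simp
    ring
  rw [hEu, hEv,
    exists_combo τ hτ' (2*A*(P-1)+a*(C:ℤ)*R) (2*A*Q+a*(C:ℤ)*(S-1)) (2*(C:ℤ)) h2C,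
    exists_combo τ hτ' (P-1) Q 2 two_ne_zero]
  have harith := arith A a C hC ha ha' hgcd γ
  rw [hP, hQ, hR, hS] at harith
  rw [← harith]
  tauto
end

section
/- Fix integers A, a and a positive integer C with 0 ≤ a ≤ 3 such that A/(2C) and a/4 are not both in (1/2)ℤ. Let h be an odd integer and k a positive integer with gcd(h,k) = 1, and suppose that for all integers n ≥ 1 one has nh/k ± (Ah/(Ck) + a/2) ∉ ℤ. Then: (i) for every integer n ≥ 0 the denominators (i^a e^{πiAh/(Ck)}; e^{2πih/k})_{n+1} and (i^{−a} e^{−πiAh/(Ck)} e^{2πih/k}; e^{2πih/k})_{n+1} are nonzero; (ii) (−e^{πih/k}; e^{πih/k})_n = 0 for all n ≥ k; hence the series g₂(i^a e^{πiAh/(Ck)}; e^{πih/k}) terminates and defines a well-defined complex number, equal to the finite sum over 0 ≤ n ≤ k−1. -/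
noncomputable section

/-- q-Pochhammer symbol `(z;q)_n = ∏_{j=0}^{n-1}(1 - z qʲ)`. -/
def qPoch (z q : ℂ) (n : ℕ) : ℂ := ∏ j ∈ Finset.range n, (1 - z * q^j)

/-- The `n`-th term of the universal mock theta function `g₂`. -/
def g2term (z q : ℂ) (n : ℕ) : ℂ :=
  qPoch (-q) q n * q^(n*(n+1)/2) / (qPoch z q (n+1) * qPoch (z⁻¹ * q) q (n+1))

/-- The universal mock theta function `g₂(z;q)`. -/
def g2 (z q : ℂ) : ℂ := ∑' n : ℕ, g2term z q n

end

private lemma exp_rat_eq_one_iff (r : ℚ) :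
    Complex.exp (2 * (Real.pi:ℂ) * Complex.I * (r:ℂ)) = 1 ↔ ∃ m : ℤ, r = (m:ℚ) := by
  rw [Complex.exp_eq_one_iff]
  have hπ : (Real.pi : ℂ) ≠ 0 := by exact_mod_cast Real.pi_ne_zero
  have h2 : (2 * (Real.pi:ℂ) * Complex.I) ≠ 0 := by
    simp [hπ, Complex.I_ne_zero]
  constructor
  · rintro ⟨n, hn⟩
    refine ⟨n, ?_⟩
    have : (r:ℂ) = (n:ℂ) := by
      apply mul_left_cancel₀ h2
      rw [hn]; ring
    exact_mod_cast this
  · rintro ⟨m, rfl⟩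
    exact ⟨m, by push_cast; ring⟩

private lemma factor_ne (r : ℚ) (hne : ∀ m : ℤ, r ≠ (m:ℚ)) (w : ℂ)
    (hw : w = Complex.exp (2 * (Real.pi:ℂ) * Complex.I * (r:ℂ))) : (1:ℂ) - w ≠ 0 := by
  rw [hw, sub_ne_zero]
  intro hcontra
  obtain ⟨m, hm⟩ := (exp_rat_eq_one_iff r).1 hcontra.symm
  exact hne m hm

private lemma I_eq_exp : Complex.I = Complex.exp ((Real.pi:ℂ) / 2 * Complex.I) := by
  rw [Complex.exp_mul_I, Complex.cos_pi_div_two, Complex.sin_pi_div_two]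
  ring

/-- termination and well-definedness of
`g₂(iᵃ e^{πiAh/(Ck)}; e^{πih/k})` at appropriate rationals `h/k`. -/
theorem stmt6 (A a : ℤ) (C : ℕ) (hC : 0 < C) (ha : 0 ≤ a) (ha' : a ≤ 3)
    (hboth : ¬ ((∃ m : ℤ, (A:ℚ)/(2*(C:ℚ)) = (m:ℚ)/2) ∧ (∃ m : ℤ, (a:ℚ)/4 = (m:ℚ)/2)))
    (h : ℤ) (k : ℕ) (hodd : Odd h) (hk : 0 < k) (hgcd : Int.gcd h (k:ℤ) = 1)
    (hyp : ∀ n : ℤ, 1 ≤ n → ∀ m : ℤ,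
      ((n*h : ℤ):ℚ)/(k:ℚ) + ((A:ℚ)*(h:ℚ)/((C:ℚ)*(k:ℚ)) + (a:ℚ)/2) ≠ (m:ℚ) ∧
      ((n*h : ℤ):ℚ)/(k:ℚ) - ((A:ℚ)*(h:ℚ)/((C:ℚ)*(k:ℚ)) + (a:ℚ)/2) ≠ (m:ℚ)) :
    (∀ n : ℕ,
      qPoch (Complex.I^a * Complex.exp (Real.pi * Complex.I * (A:ℂ) * (h:ℂ) / ((C:ℂ) * (k:ℂ))))
        (Complex.exp (2 * Real.pi * Complex.I * (h:ℂ) / (k:ℂ))) (n+1) ≠ 0 ∧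
      qPoch (Complex.I^(-a) * Complex.exp (-(Real.pi * Complex.I * (A:ℂ) * (h:ℂ)) / ((C:ℂ) * (k:ℂ)))
          * Complex.exp (2 * Real.pi * Complex.I * (h:ℂ) / (k:ℂ)))
        (Complex.exp (2 * Real.pi * Complex.I * (h:ℂ) / (k:ℂ))) (n+1) ≠ 0) ∧
    (∀ n : ℕ, k ≤ n →
      qPoch (-Complex.exp (Real.pi * Complex.I * (h:ℂ) / (k:ℂ)))
        (Complex.exp (Real.pi * Complex.I * (h:ℂ) / (k:ℂ))) n = 0) ∧
    Summable (fun n : ℕ => g2term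
        (Complex.I^a * Complex.exp (Real.pi * Complex.I * (A:ℂ) * (h:ℂ) / ((C:ℂ) * (k:ℂ))))
        (Complex.exp (Real.pi * Complex.I * (h:ℂ) / (k:ℂ))) n) ∧
    g2 (Complex.I^a * Complex.exp (Real.pi * Complex.I * (A:ℂ) * (h:ℂ) / ((C:ℂ) * (k:ℂ))))
        (Complex.exp (Real.pi * Complex.I * (h:ℂ) / (k:ℂ)))
      = ∑ n ∈ Finset.range k, g2term
          (Complex.I^a * Complex.exp (Real.pi * Complex.I * (A:ℂ) * (h:ℂ) / ((C:ℂ) * (k:ℂ))))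
          (Complex.exp (Real.pi * Complex.I * (h:ℂ) / (k:ℂ))) n := by
  have hkQ : (k:ℚ) ≠ 0 := Nat.cast_ne_zero.2 hk.ne'
  have hCQ : (C:ℚ) ≠ 0 := Nat.cast_ne_zero.2 hC.ne'
  have hkC : (k:ℂ) ≠ 0 := Nat.cast_ne_zero.2 hk.ne'
  have hCC : (C:ℂ) ≠ 0 := Nat.cast_ne_zero.2 hC.ne'
  have h2Ck : (2:ℂ) * (C:ℂ) * (k:ℂ) ≠ 0 := by simp [hCC, hkC]
  -- first denominator factors
  have hz1 : ∀ j : ℕ,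
      (1:ℂ) - (Complex.I^a * Complex.exp (Real.pi * Complex.I * (A:ℂ) * (h:ℂ) / ((C:ℂ) * (k:ℂ))))
        * (Complex.exp (2 * Real.pi * Complex.I * (h:ℂ) / (k:ℂ)))^j ≠ 0 := by
    intro j
    set r : ℚ := (a:ℚ)/4 + (A:ℚ)*(h:ℚ)/(2*(C:ℚ)*(k:ℚ)) + (j:ℚ)*(h:ℚ)/(k:ℚ) with hr
    apply factor_ne r
    · intro m hm
      refine (hyp (2*((j:ℤ)+(k:ℤ))) (by omega) (2*m + 2*h)).1 ?_
      rw [hr] at hm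
      field_simp at hm ⊢
      push_cast
      ring_nf
      ring_nf at hm
      linarith
    · have hIa : Complex.I ^ a = Complex.exp ((a:ℂ) * ((Real.pi:ℂ) / 2 * Complex.I)) := by
        rw [Complex.exp_int_mul, ← I_eq_exp]
      rw [hIa, ← Complex.exp_nat_mul, ← Complex.exp_add, ← Complex.exp_add]
      congr 1
      rw [hr]
      push_cast
      ring
  -- second denominator factors
  have hz2 : ∀ j : ℕ,
      (1:ℂ) - (Complex.I^(-a) * Complex.exp (-(Real.pi * Complex.I * (A:ℂ) * (h:ℂ)) / ((C:ℂ) * (k:ℂ)))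
          * Complex.exp (2 * Real.pi * Complex.I * (h:ℂ) / (k:ℂ)))
        * (Complex.exp (2 * Real.pi * Complex.I * (h:ℂ) / (k:ℂ)))^j ≠ 0 := by
    intro j
    set r : ℚ := -((a:ℚ)/4) - (A:ℚ)*(h:ℚ)/(2*(C:ℚ)*(k:ℚ)) + ((j:ℚ)+1)*(h:ℚ)/(k:ℚ) with hr
    apply factor_ne r
    · intro m hm
      refine (hyp (2*((j:ℤ)+1)) (by omega) (2*m)).2 ?_
      rw [hr] at hm
      field_simp at hm ⊢
      push_cast
      ring_nf
      ring_nf at hm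
      linarith
    · have hIa : Complex.I ^ (-a) = Complex.exp (-(a:ℂ) * ((Real.pi:ℂ) / 2 * Complex.I)) := by
        rw [show -(a:ℂ) = ((-a : ℤ) : ℂ) by push_cast; ring, Complex.exp_int_mul, ← I_eq_exp]
      rw [hIa, ← Complex.exp_nat_mul, ← Complex.exp_add, ← Complex.exp_add, ← Complex.exp_add]
      congr 1
      rw [hr]
      push_cast
      ring
  -- part 2: the numerator vanishes
  have part2 : ∀ n : ℕ, k ≤ n →
      qPoch (-Complex.exp (Real.pi * Complex.I * (h:ℂ) / (k:ℂ)))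
        (Complex.exp (Real.pi * Complex.I * (h:ℂ) / (k:ℂ))) n = 0 := by
    intro n hn
    unfold qPoch
    apply Finset.prod_eq_zero (Finset.mem_range.2 (show k - 1 < n by omega))
    have hq : (Complex.exp (Real.pi * Complex.I * (h:ℂ) / (k:ℂ)))^(k-1+1) = -1 := by
      have hk1 : k - 1 + 1 = k := by omega
      rw [hk1, ← Complex.exp_nat_mul]
      have : (k:ℂ) * (Real.pi * Complex.I * (h:ℂ) / (k:ℂ)) = (h:ℂ) * (Real.pi * Complex.I) := by
        field_simp
      rw [this, Complex.exp_int_mul, Complex.exp_pi_mul_I, Odd.neg_one_zpow hodd]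
    have : -Complex.exp (Real.pi * Complex.I * (h:ℂ) / (k:ℂ)) *
        (Complex.exp (Real.pi * Complex.I * (h:ℂ) / (k:ℂ)))^(k-1)
        = -((Complex.exp (Real.pi * Complex.I * (h:ℂ) / (k:ℂ)))^(k-1+1)) := by
      rw [pow_succ]; ring
    rw [this, hq]
    ring
  -- g2term vanishes for n ≥ k
  have hterm : ∀ n : ℕ, n ∉ Finset.range k → g2term
      (Complex.I^a * Complex.exp (Real.pi * Complex.I * (A:ℂ) * (h:ℂ) / ((C:ℂ) * (k:ℂ))))
      (Complex.exp (Real.pi * Complex.I * (h:ℂ) / (k:ℂ))) n = 0 := by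
    intro n hn
    rw [Finset.mem_range, not_lt] at hn
    unfold g2term
    rw [part2 n hn]
    simp
  refine ⟨?_, part2, summable_of_ne_finset_zero hterm, tsum_eq_sum hterm⟩
  intro n
  constructor
  · unfold qPoch
    rw [Finset.prod_ne_zero_iff]
    intro j _
    exact hz1 j
  · unfold qPoch
    rw [Finset.prod_ne_zero_iff]
    intro j _
    exact hz2 j
end

section
/- Fix integers A and a ∈ {1,3} and a positive integer C with gcd(A,C) = 1. Let h be an odd integer and k a positive integer with gcd(h,k) = 1, and suppose either C ∤ 2h, or (C ∤ h and k is even). Then for every integer n ≥ 1, neither nh/k + (Ah/(Ck) + a/2) nor nh/k − (Ah/(Ck) + a/2) is an integer; equivalently, there are no integers n ≥ 1 and r with Ck(2r ∓ a) = 2h(Cn ± A). -/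
lemma key8 (B : ℤ) (C : ℕ) (hgcd : IsCoprime B (C:ℤ)) (h : ℤ) (k : ℕ)
    (hS : ¬ ((C:ℤ) ∣ 2*h) ∨ (¬ ((C:ℤ) ∣ h) ∧ 2 ∣ k)) (x y : ℤ) :
    (C:ℤ) * k * x ≠ 2 * h * ((C:ℤ) * y + B) := by
  intro heq
  rcases hS with h2 | ⟨hh, ⟨k', rfl⟩⟩
  · apply h2
    have hd : (C:ℤ) ∣ 2*h*B := ⟨k*x - 2*h*y, by linarith⟩
    exact hgcd.symm.dvd_of_dvd_mul_right hd
  · apply hh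
    have hd : (C:ℤ) ∣ h*B := ⟨k'*x - h*y, by push_cast at heq ⊢; linarith⟩
    exact hgcd.symm.dvd_of_dvd_mul_right hd

/-- for `a ∈ {1,3}` and `h/k ∈ S_{C2} ∪ S_ev`, the quantities
`nh/k ± (Ah/(Ck) + a/2)` are never integers; equivalently neither
`Ck(2r − a) = 2h(Cn + A)` nor `Ck(2r + a) = 2h(Cn − A)` has a solution. -/
theorem stmt8 (A a : ℤ) (C : ℕ) (hC : 0 < C) (ha : a = 1 ∨ a = 3)
    (hgcd : Int.gcd A (C:ℤ) = 1)
    (h : ℤ) (k : ℕ) (hodd : Odd h) (hk : 0 < k) (hhk : Int.gcd h (k:ℤ) = 1)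
    (hS : ¬ ((C:ℤ) ∣ 2*h) ∨ (¬ ((C:ℤ) ∣ h) ∧ 2 ∣ k)) :
    (∀ n : ℤ, 1 ≤ n → ∀ m : ℤ,
      ((n*h : ℤ):ℚ)/(k:ℚ) + ((A:ℚ)*(h:ℚ)/((C:ℚ)*(k:ℚ)) + (a:ℚ)/2) ≠ (m:ℚ) ∧
      ((n*h : ℤ):ℚ)/(k:ℚ) - ((A:ℚ)*(h:ℚ)/((C:ℚ)*(k:ℚ)) + (a:ℚ)/2) ≠ (m:ℚ)) ∧
    (∀ n r : ℤ, 1 ≤ n →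
      (C:ℤ) * k * (2*r - a) ≠ 2 * h * ((C:ℤ) * n + A) ∧
      (C:ℤ) * k * (2*r + a) ≠ 2 * h * ((C:ℤ) * n - A)) := by
  have hcopA : IsCoprime A (C:ℤ) := Int.isCoprime_iff_gcd_eq_one.mpr hgcd
  have hcopA' : IsCoprime (-A) (C:ℤ) := hcopA.neg_left
  have hk0 : (k:ℚ) ≠ 0 := by positivity
  have hC0 : (C:ℚ) ≠ 0 := by positivity
  have key1 : ∀ x y : ℤ, (C:ℤ) * k * x ≠ 2 * h * ((C:ℤ) * y + A) :=
    key8 A C hcopA h k hS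
  have key2 : ∀ x y : ℤ, (C:ℤ) * k * x ≠ 2 * h * ((C:ℤ) * y + (-A)) :=
    key8 (-A) C hcopA' h k hS
  constructor
  · intro n hn m
    constructor
    · intro heq
      apply key1 (2*m - a) n
      have : (((C:ℤ) * k * (2*m - a) : ℤ) : ℚ) = ((2 * h * ((C:ℤ) * n + A) : ℤ) : ℚ) := by
        field_simp at heq
        push_cast
        push_cast at heq
        have hc : (k:ℚ) * ((n:ℚ)*h*((C:ℚ)*2) + ((A:ℚ)*h*2 + (a:ℚ)*((C:ℚ)*k))) = (k:ℚ) * ((m:ℚ)*((C:ℚ)*k*2)) := by linear_combination (k:ℚ) * heq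
        have := mul_left_cancel₀ hk0 hc
        linarith
      exact_mod_cast this
    · intro heq
      apply key2 (2*m + a) n
      have : (((C:ℤ) * k * (2*m + a) : ℤ) : ℚ) = ((2 * h * ((C:ℤ) * n + (-A)) : ℤ) : ℚ) := by
        field_simp at heq
        push_cast
        push_cast at heq
        have hc : (k:ℚ) * ((n:ℚ)*h*((C:ℚ)*2) - ((A:ℚ)*h*2 + (a:ℚ)*((C:ℚ)*k))) = (k:ℚ) * ((m:ℚ)*((C:ℚ)*k*2)) := by linear_combination (k:ℚ) * heq
        have := mul_left_cancel₀ hk0 hc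
        linarith
      exact_mod_cast this
  · intro n r hn
    refine ⟨key1 (2*r - a) n, ?_⟩
    intro heq
    exact key2 (2*r + a) n (by linarith)
end

section
/- Fix integers A, a and a positive integer C with 0 ≤ a ≤ 3 and gcd(A,C) = 1, and let r = 1 if a is even and r = 2 if a is odd. If h/k ∈ S_α (with h odd, k ∈ ℕ, gcd(h,k)=1) and rh + k ≠ 0, then the rational number h/(rh+k) (written in the normalized form h'/k' with k' > 0, gcd(h',k') = 1) again lies in S_α; the same holds for the rational h/(k − rh) whenever k − rh ≠ 0. That is, the generator M_r = (1 0; r 1) of G_α and its inverse map S_α into S_α. -/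
/-- `S`: rationals with odd numerator (in lowest terms, positive denominator). -/
def Sprop (x : ℚ) : Prop := Odd x.num

/-- `S_{C1} = {h/k ∈ S : C ∤ h}`. -/
def SC1 (C : ℕ) (x : ℚ) : Prop := Sprop x ∧ ¬ ((C:ℤ) ∣ x.num)

/-- `S_{C2} = {h/k ∈ S : C ∤ 2h}`. -/
def SC2 (C : ℕ) (x : ℚ) : Prop := Sprop x ∧ ¬ ((C:ℤ) ∣ 2 * x.num)

/-- `S_ev = {h/k ∈ S_{C1} : k even}`. -/
def Sev (C : ℕ) (x : ℚ) : Prop := SC1 C x ∧ 2 ∣ x.den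

/-- The quantum set `S_α`. -/
def SalphaQ (a : ℤ) (C : ℕ) (x : ℚ) : Prop :=
  if Even a then SC1 C x else SC2 C x ∨ Sev C x
lemma num_den_coprime (h d : ℤ) (hd : d ≠ 0) (hc : Int.gcd h d = 1) :
    ((h:ℚ)/(d:ℚ)).num = d.sign * h ∧ (((h:ℚ)/(d:ℚ)).den : ℤ) = d.natAbs := by
  rw [← Rat.divInt_eq_div]
  refine ⟨?_, ?_⟩
  · rw [Rat.num_divInt, Int.gcd_comm, hc]; simp
  · rw [Rat.den_divInt, Int.gcd_comm]; simp [hd, hc]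

lemma key (a : ℤ) (C : ℕ) (h k d : ℤ) (hodd : Odd h)
    (hd : d ≠ 0) (hcd : Int.gcd h d = 1)
    (hpar : ¬ Even a → ((2:ℤ) ∣ k → (2:ℤ) ∣ d))
    (hS : (if Even a then (Odd h ∧ ¬ ((C:ℤ) ∣ h))
      else ((Odd h ∧ ¬ ((C:ℤ) ∣ 2*h)) ∨ ((Odd h ∧ ¬ ((C:ℤ) ∣ h)) ∧ (2:ℤ) ∣ k)))) :
    (if Even a then SC1 C ((h:ℚ)/(d:ℚ)) else SC2 C ((h:ℚ)/(d:ℚ)) ∨ Sev C ((h:ℚ)/(d:ℚ))) := by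
  obtain ⟨hnum, hden⟩ := num_den_coprime h d hd hcd
  have hsign : d.sign = 1 ∨ d.sign = -1 := by
    rcases hd.lt_or_gt with h1 | h1
    · exact Or.inr (Int.sign_eq_neg_one_of_neg h1)
    · exact Or.inl (Int.sign_eq_one_of_pos h1)
  have hodd' : Odd (((h:ℚ)/(d:ℚ)).num) := by
    rw [hnum]; rcases hsign with hs | hs <;> rw [hs] <;> simpa using hodd
  have hdvd : ∀ c : ℤ, (c ∣ ((h:ℚ)/(d:ℚ)).num) ↔ c ∣ h := by
    intro c; rw [hnum]; rcases hsign with hs | hs <;> rw [hs] <;> simp [dvd_neg]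
  have hdvd2 : ∀ c : ℤ, (c ∣ 2 * ((h:ℚ)/(d:ℚ)).num) ↔ c ∣ 2*h := by
    intro c; rw [hnum]; rcases hsign with hs | hs <;> rw [hs] <;>
      simp [dvd_neg, mul_comm, mul_assoc, mul_left_comm]
  by_cases hA : Even a
  · simp only [if_pos hA] at hS ⊢
    exact ⟨hodd', fun hc => hS.2 ((hdvd _).mp hc)⟩
  · simp only [if_neg hA] at hS ⊢
    rcases hS with h1 | h2
    · exact Or.inl ⟨hodd', fun hc => h1.2 ((hdvd2 _).mp hc)⟩
    · refine Or.inr ⟨⟨hodd', fun hc => h2.1.2 ((hdvd _).mp hc)⟩, ?_⟩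
      have : (2:ℤ) ∣ (((h:ℚ)/(d:ℚ)).den : ℤ) := by
        rw [hden]; rcases hpar hA h2.2 with ⟨c, hc⟩
        exact ⟨c.natAbs, by rw [hc]; rcases Int.natAbs_eq (2*c) with e | e <;>
          simp [Int.natAbs_mul]⟩
      exact_mod_cast this

/-- the generator `M_r = (1 0; r 1)` of `G_α` and its inverse
map `S_α` into `S_α`. -/
theorem stmt9 (A a : ℤ) (C : ℕ) (hC : 0 < C)
    (ha : a = 0 ∨ a = 1 ∨ a = 2 ∨ a = 3) (hgcd : Int.gcd A (C:ℤ) = 1)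
    (r : ℤ) (hr : r = if Even a then 1 else 2)
    (h k : ℤ) (hodd : Odd h) (hk : 0 < k) (hhk : Int.gcd h k = 1)
    (hS : SalphaQ a C ((h:ℚ)/(k:ℚ))) :
    (r*h + k ≠ 0 → SalphaQ a C ((h:ℚ)/((r*h + k : ℤ):ℚ))) ∧
    (k - r*h ≠ 0 → SalphaQ a C ((h:ℚ)/((k - r*h : ℤ):ℚ))) := by
  have hk0 : k ≠ 0 := hk.ne'
  obtain ⟨hn, hd⟩ := num_den_coprime h k hk0 hhk
  rw [Int.sign_eq_one_of_pos hk, one_mul] at hn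
  have hS' : (if Even a then (Odd h ∧ ¬ ((C:ℤ) ∣ h))
      else ((Odd h ∧ ¬ ((C:ℤ) ∣ 2*h)) ∨ ((Odd h ∧ ¬ ((C:ℤ) ∣ h)) ∧ (2:ℤ) ∣ k))) := by
    unfold SalphaQ SC1 SC2 Sev Sprop at hS
    by_cases hA : Even a <;> simp only [if_pos, if_neg, hA, if_true, if_false] at hS ⊢
    · rwa [hn] at hS
    · rcases hS with h1 | h2
      · exact Or.inl (by rwa [hn] at h1)
      · refine Or.inr ⟨?_, ?_⟩
        · have h21 := h2.1; unfold SC1 Sprop at h21; rwa [hn] at h21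
        have : (2:ℤ) ∣ (((h:ℚ)/(k:ℚ)).den : ℤ) := by exact_mod_cast h2.2
        rw [hd, Int.natAbs_of_nonneg hk.le] at this
        exact this
  have hcop : IsCoprime h k := Int.isCoprime_iff_gcd_eq_one.mpr hhk
  have hpar : ¬ Even a → r = 2 := fun hA => by rw [hr, if_neg hA]
  constructor
  · intro hne
    have hc1 : Int.gcd h (r*h + k) = 1 := by
      rw [← Int.isCoprime_iff_gcd_eq_one]
      exact (show k + h*r = r*h + k by ring) ▸ hcop.add_mul_left_right r
    have := key a C h k (r*h+k) hodd hne hc1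
      (fun hA h2k => by rw [hpar hA]; exact Dvd.dvd.add ⟨h, by ring⟩ h2k) hS'
    unfold SalphaQ
    exact this
  · intro hne
    have hc1 : Int.gcd h (k - r*h) = 1 := by
      rw [← Int.isCoprime_iff_gcd_eq_one]
      exact (show k + h*(-r) = k - r*h by ring) ▸ hcop.add_mul_left_right (-r)
    have := key a C h k (k - r*h) hodd hne hc1
      (fun hA h2k => by rw [hpar hA]; exact Dvd.dvd.sub h2k ⟨h, by ring⟩) hS'
    unfold SalphaQ
    exact this
end

section
/- Fix integers A, a and a positive integer C with a ∈ {0,1,2,3}, gcd(A,C) = 1, and 0 < A/C < 1, and let r = C if C is even and r = 2C if C is odd. Then for all τ ∈ ℍ, V_α(τ + r) = ζ₈^{−r} (−1)^{Ar/C + r/2} e(−(r/2)(A/C − 1/2)²) V_α(τ), where Ar/C and r/2 are integers. -/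
open Complex Real

noncomputable section

/-- `e(z) = e^{2πiz}`. -/
def ee (z : ℂ) : ℂ := Complex.exp (2 * Real.pi * Complex.I * z)

/-- Jacobi theta: `ϑ(z;τ) = ∑_{v∈ℤ+1/2} e^{πiv²τ + 2πiv(z+1/2)}`. -/
def jTheta (z τ : ℂ) : ℂ :=
  ∑' n : ℤ, Complex.exp (Real.pi * Complex.I * ((n : ℂ) + 1/2)^2 * τ
      + 2 * Real.pi * Complex.I * ((n : ℂ) + 1/2) * (z + 1/2))

/-- Zwegers' μ-function. -/
def zMu (u v τ : ℂ) : ℂ :=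
  Complex.exp (Real.pi * Complex.I * u) / jTheta v τ *
    ∑' n : ℤ, (-1 : ℂ)^n * Complex.exp (2 * Real.pi * Complex.I * (n : ℂ) * v)
      * Complex.exp (Real.pi * Complex.I * (n : ℂ) * ((n : ℂ) + 1) * τ)
      / (1 - Complex.exp (2 * Real.pi * Complex.I * u)
            * Complex.exp (2 * Real.pi * Complex.I * (n : ℂ) * τ))

/-- Zwegers' nonholomorphic `R` function. -/
def zR (u τ : ℂ) : ℂ :=
  ∑' n : ℤ,
    (((Real.sign ((n : ℝ) + 1/2)
        - 2 * ∫ t in (0:ℝ)..((((n : ℝ) + 1/2) + u.im / τ.im) * Real.sqrt (2 * τ.im)),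
            Real.exp (-Real.pi * t^2)) : ℝ) : ℂ)
      * (-1 : ℂ)^n
      * Complex.exp (Real.pi * Complex.I * ((n : ℂ) + 1/2)^2 * τ
          - 2 * Real.pi * Complex.I * ((n : ℂ) + 1/2) * u)

/-- Completed `μ̂`. -/
def zMuHat (u v τ : ℂ) : ℂ := zMu u v τ + zR (u - v) τ / 2

/-- `V_α(τ) = i^{a+1} q^{-(2A-C)²/(8C²)} μ(2α, τ/2; τ)` with `2α = (A/C)τ + a/2`. -/
def Valpha (A : ℤ) (C : ℕ) (a : ℤ) (τ : ℂ) : ℂ :=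
  Complex.I^(a+1) * ee (-(((2*A - (C:ℤ) : ℤ) : ℂ)^2 / (8 * (C:ℂ)^2)) * τ)
    * zMu ((A : ℂ)/(C : ℂ) * τ + (a : ℂ)/2) (τ/2) τ

/-- Completed `V̂_α`. -/
def ValphaHat (A : ℤ) (C : ℕ) (a : ℤ) (τ : ℂ) : ℂ :=
  Complex.I^(a+1) * ee (-(((2*A - (C:ℤ) : ℤ) : ℂ)^2 / (8 * (C:ℂ)^2)) * τ)
    * zMuHat ((A : ℂ)/(C : ℂ) * τ + (a : ℂ)/2) (τ/2) τ

/-- Mordell integral. -/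
def mordellH (u τ : ℂ) : ℂ :=
  ∫ x : ℝ, Complex.exp (Real.pi * Complex.I * τ * (x:ℂ)^2 - 2 * Real.pi * u * (x:ℂ))
    / Complex.cosh (Real.pi * (x:ℂ))

/-- Zwegers' weight 3/2 theta functions `g_{a,b}`. -/
def gab (a b : ℝ) (τ : ℂ) : ℂ :=
  ∑' n : ℤ, ((a : ℂ) + (n : ℂ))
    * Complex.exp (Real.pi * Complex.I * ((a:ℂ) + (n:ℂ))^2 * τ
        + 2 * Real.pi * Complex.I * ((a:ℂ) + (n:ℂ)) * (b:ℂ))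

/-- Integral along the vertical ray from `c` to `i∞`. -/
def rayIntegral (c : ℂ) (f : ℂ → ℂ) : ℂ :=
  ∫ t in Set.Ioi (0:ℝ), Complex.I * f (c + (t : ℂ) * Complex.I)

/-- The function `δ_{x,y}(τ)`. -/
def deltaXY (x y : ℝ) (τ : ℂ) : ℂ :=
  rayIntegral 0 (fun z => gab (x + 1/2) (y + 1/2) z / (-Complex.I * (z + τ)) ^ (1/2 : ℂ))
    + ee ((x:ℂ) * ((y:ℂ) + 1/2)) * ee (-((x:ℂ)^2/2) * τ) * mordellH ((x:ℂ)*τ - (y:ℂ)) τ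

/-- The eta multiplier `ψ(γ)` for `γ = (a b; c d)`. -/
def etaPsi (a b c d : ℤ) : ℂ :=
  if Odd c then
    ((jacobiSym d c.natAbs : ℤ) : ℂ)
      * Complex.exp (Real.pi * Complex.I / 12 * (((a+d)*c - b*d*(c^2-1) - 3*c : ℤ) : ℂ))
  else
    (((if d < 0 ∧ c < 0 then -1 else 1) * jacobiSym c d.natAbs : ℤ) : ℂ)
      * Complex.exp (Real.pi * Complex.I / 12
          * (((a+d)*c - b*d*(c^2-1) + 3*d - 3 - 3*c*d : ℤ) : ℂ))

end


section Aux

private lemma exp_eq_exp_of (n : ℤ) {x y : ℂ} (h : x = y + (n:ℂ) * (2*(Real.pi:ℂ)*Complex.I)) :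
    Complex.exp x = Complex.exp y := by
  rw [h, Complex.exp_add, Complex.exp_int_mul_two_pi_mul_I, mul_one]

private lemma neg_one_zpow_eq (j : ℤ) :
    ((-1 : ℂ))^j = Complex.exp ((Real.pi:ℂ) * Complex.I * (j:ℂ)) := by
  rw [show (Real.pi:ℂ) * Complex.I * (j:ℂ) = (j:ℂ) * ((Real.pi:ℂ) * Complex.I) by ring,
    Complex.exp_int_mul, Complex.exp_pi_mul_I]

private lemma jTheta_shift (v τ : ℂ) (m : ℤ) :
    jTheta (v + (m:ℂ)) (τ + 2*(m:ℂ))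
      = Complex.exp ((Real.pi:ℂ) * Complex.I * (3*(m:ℂ)/2)) * jTheta v τ := by
  unfold jTheta
  rw [← tsum_mul_left]
  refine tsum_congr fun n => ?_
  rw [← Complex.exp_add]
  exact exp_eq_exp_of (m*n^2 + 2*m*n) (by push_cast; ring)

private lemma zMu_shift (u v τ : ℂ) (k m : ℤ) :
    zMu (u + (k:ℂ)) (v + (m:ℂ)) (τ + 2*(m:ℂ))
      = Complex.exp ((Real.pi:ℂ) * Complex.I * (k:ℂ))
          / Complex.exp ((Real.pi:ℂ) * Complex.I * (3*(m:ℂ)/2)) * zMu u v τ := by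
  unfold zMu
  rw [jTheta_shift]
  have hS : (∑' n : ℤ, (-1 : ℂ)^n * Complex.exp (2 * Real.pi * Complex.I * (n : ℂ) * (v + (m:ℂ)))
      * Complex.exp (Real.pi * Complex.I * (n : ℂ) * ((n : ℂ) + 1) * (τ + 2*(m:ℂ)))
      / (1 - Complex.exp (2 * Real.pi * Complex.I * (u + (k:ℂ)))
            * Complex.exp (2 * Real.pi * Complex.I * (n : ℂ) * (τ + 2*(m:ℂ)))))
      = ∑' n : ℤ, (-1 : ℂ)^n * Complex.exp (2 * Real.pi * Complex.I * (n : ℂ) * v)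
      * Complex.exp (Real.pi * Complex.I * (n : ℂ) * ((n : ℂ) + 1) * τ)
      / (1 - Complex.exp (2 * Real.pi * Complex.I * u)
            * Complex.exp (2 * Real.pi * Complex.I * (n : ℂ) * τ)) := by
    refine tsum_congr fun n => ?_
    have e1 : Complex.exp (2 * (Real.pi:ℂ) * Complex.I * (n : ℂ) * (v + (m:ℂ)))
        = Complex.exp (2 * (Real.pi:ℂ) * Complex.I * (n : ℂ) * v) :=
      exp_eq_exp_of (n*m) (by push_cast; ring)
    have e2 : Complex.exp ((Real.pi:ℂ) * Complex.I * (n : ℂ) * ((n : ℂ) + 1) * (τ + 2*(m:ℂ)))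
        = Complex.exp ((Real.pi:ℂ) * Complex.I * (n : ℂ) * ((n : ℂ) + 1) * τ) :=
      exp_eq_exp_of (n*(n+1)*m) (by push_cast; ring)
    have e3 : Complex.exp (2 * (Real.pi:ℂ) * Complex.I * (u + (k:ℂ)))
        = Complex.exp (2 * (Real.pi:ℂ) * Complex.I * u) :=
      exp_eq_exp_of k (by push_cast; ring)
    have e4 : Complex.exp (2 * (Real.pi:ℂ) * Complex.I * (n : ℂ) * (τ + 2*(m:ℂ)))
        = Complex.exp (2 * (Real.pi:ℂ) * Complex.I * (n : ℂ) * τ) :=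
      exp_eq_exp_of (2*n*m) (by push_cast; ring)
    rw [e1, e2, e3, e4]
  rw [hS]
  have e5 : Complex.exp ((Real.pi:ℂ) * Complex.I * (u + (k:ℂ)))
      = Complex.exp ((Real.pi:ℂ) * Complex.I * (k:ℂ)) * Complex.exp ((Real.pi:ℂ) * Complex.I * u) := by
    rw [← Complex.exp_add]; ring_nf
  rw [e5, mul_div_mul_comm, mul_assoc]

end Aux

/-- transformation of `V_α` under `τ ↦ τ + r` where `r = C` (C even)
or `r = 2C` (C odd); `Ar/C` and `r/2` are integers. -/
theorem stmt11 (A a : ℤ) (C : ℕ) (hC : 0 < C)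
    (ha : a = 0 ∨ a = 1 ∨ a = 2 ∨ a = 3) (hgcd : Int.gcd A (C:ℤ) = 1)
    (hpos : 0 < (A:ℚ)/(C:ℚ)) (hlt : (A:ℚ)/(C:ℚ) < 1)
    (r : ℤ) (hr : r = if Even C then (C:ℤ) else 2*(C:ℤ)) :
    (C:ℤ) ∣ A * r ∧ (2:ℤ) ∣ r ∧
    ∀ τ : ℂ, 0 < τ.im →
      Valpha A C a (τ + (r:ℂ))
        = Complex.exp (-(2 * Real.pi * Complex.I * (r:ℂ)) / 8)
          * (-1 : ℂ)^(A*r/C + r/2)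
          * ee (-((r:ℂ)/2) * ((A:ℂ)/(C:ℂ) - 1/2)^2)
          * Valpha A C a τ := by
  classical
  have hCne : (C:ℂ) ≠ 0 := Nat.cast_ne_zero.mpr hC.ne'
  have hd1 : (C:ℤ) ∣ A * r := by
    rw [hr]; split_ifs
    · exact ⟨A, by ring⟩
    · exact ⟨2*A, by ring⟩
  have hd2 : (2:ℤ) ∣ r := by
    rw [hr]; split_ifs with h
    · exact ((Int.even_coe_nat C).mpr h).two_dvd
    · exact ⟨(C:ℤ), rfl⟩
  refine ⟨hd1, hd2, fun τ hτ => ?_⟩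
  set k := A * r / C with hkdef
  set m := r / 2 with hmdef
  have hk : (C:ℤ) * k = A * r := Int.mul_ediv_cancel' hd1
  have hm : r = 2 * m := (Int.mul_ediv_cancel' hd2).symm
  have hrc : (r:ℂ) = 2 * (m:ℂ) := by exact_mod_cast congrArg (Int.cast : ℤ → ℂ) hm
  have hkc : (C:ℂ) * (k:ℂ) = (A:ℂ) * (r:ℂ) := by exact_mod_cast congrArg (Int.cast : ℤ → ℂ) hk
  have h5 : (A:ℂ)/(C:ℂ) * (r:ℂ) = (k:ℂ) := by
    field_simp
    linear_combination -hkc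
  have hu : (A:ℂ)/(C:ℂ) * (τ + (r:ℂ)) + (a:ℂ)/2
      = ((A:ℂ)/(C:ℂ) * τ + (a:ℂ)/2) + (k:ℂ) := by
    rw [mul_add, h5]; ring
  have hX : ((A:ℂ)/(C:ℂ) - 1/2)^2 = 2 * ((((2*A - (C:ℤ) : ℤ) : ℂ))^2 / (8 * (C:ℂ)^2)) := by
    field_simp
    push_cast
    ring
  simp only [Valpha]
  rw [hu, show (τ + (r:ℂ))/2 = τ/2 + (m:ℂ) by rw [hrc]; ring,
    show τ + (r:ℂ) = τ + 2*(m:ℂ) by rw [hrc], zMu_shift]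
  have hee : ee (-((((2*A - (C:ℤ) : ℤ) : ℂ))^2 / (8 * (C:ℂ)^2)) * (τ + 2*(m:ℂ)))
      = ee (-((((2*A - (C:ℤ) : ℤ) : ℂ))^2 / (8 * (C:ℂ)^2)) * τ)
        * ee (-((((2*A - (C:ℤ) : ℤ) : ℂ))^2 / (8 * (C:ℂ)^2)) * (2*(m:ℂ))) := by
    unfold ee
    rw [← Complex.exp_add]
    ring_nf
  rw [hee]
  have hfactor : ee (-((((2*A - (C:ℤ) : ℤ) : ℂ))^2 / (8 * (C:ℂ)^2)) * (2*(m:ℂ)))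
        * (Complex.exp ((Real.pi:ℂ) * Complex.I * (k:ℂ))
            / Complex.exp ((Real.pi:ℂ) * Complex.I * (3*(m:ℂ)/2)))
      = Complex.exp (-(2 * Real.pi * Complex.I * (r:ℂ)) / 8)
          * (-1 : ℂ)^(k + m)
          * ee (-((r:ℂ)/2) * ((A:ℂ)/(C:ℂ) - 1/2)^2) := by
    rw [neg_one_zpow_eq]
    unfold ee
    rw [← Complex.exp_sub, ← Complex.exp_add, ← Complex.exp_add, ← Complex.exp_add]
    refine exp_eq_exp_of (-m) ?_
    rw [hrc]
    push_cast
    field_simp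
    ring
  rw [← hfactor]
  ring
end

section
/- Let x, y ∈ ℝ and τ ∈ ℍ. Then δ_{x,y+1}(τ) = −e^{2πix} δ_{x,y}(τ) + (2e^{2πix}/√(−iτ)) e^{πi(y+1/2)²/τ}. -/
open Complex Real

open MeasureTheory

private lemma gab_shift (a b : ℝ) (z : ℂ) :
    gab a (b + 1) z = Complex.exp (2 * Real.pi * Complex.I * (a : ℂ)) * gab a b z := by
  unfold gab
  rw [← tsum_mul_left]
  refine tsum_congr fun n => ?_
  have h1 : Real.pi * Complex.I * ((a:ℂ) + (n:ℂ))^2 * z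
        + 2 * Real.pi * Complex.I * ((a:ℂ) + (n:ℂ)) * ((b + 1 : ℝ) : ℂ)
      = (Real.pi * Complex.I * ((a:ℂ) + (n:ℂ))^2 * z
        + 2 * Real.pi * Complex.I * ((a:ℂ) + (n:ℂ)) * (b:ℂ))
        + (2 * Real.pi * Complex.I * (a:ℂ) + (n:ℤ) * (2 * Real.pi * Complex.I)) := by
    push_cast; ring
  rw [h1]
  simp only [Complex.exp_add, Complex.exp_int_mul_two_pi_mul_I]
  ring

private lemma pIt_re_neg {τ : ℂ} (hτ : 0 < τ.im) : ((Real.pi : ℂ) * Complex.I * τ).re < 0 := by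
  simp only [Complex.mul_re, Complex.mul_im, Complex.ofReal_re, Complex.ofReal_im,
    Complex.I_re, Complex.I_im]
  nlinarith [Real.pi_pos]

private lemma cosh_pi_ne (x : ℝ) : Complex.cosh ((Real.pi : ℂ) * (x:ℂ)) ≠ 0 := by
  rw [← Complex.ofReal_mul, ← Complex.ofReal_cosh]
  exact_mod_cast (Real.cosh_pos (x := Real.pi * x)).ne'

private lemma mordell_integrable (u τ : ℂ) (hτ : 0 < τ.im) :
    Integrable (fun x : ℝ =>
      Complex.exp (Real.pi * Complex.I * τ * (x:ℂ)^2 - 2 * Real.pi * u * (x:ℂ))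
        / Complex.cosh (Real.pi * (x:ℂ))) := by
  have h0 := integrable_cexp_quadratic' (pIt_re_neg hτ) (-(2 * Real.pi) * u) 0
  refine h0.mono ?_ ?_
  · refine Continuous.aestronglyMeasurable ?_
    refine Continuous.div ?_ ?_ fun x => cosh_pi_ne x
    · exact Complex.continuous_exp.comp (by fun_prop)
    · exact Complex.continuous_cosh.comp (by fun_prop)
  · filter_upwards with x
    have hcosh : Complex.cosh ((Real.pi : ℂ) * (x:ℂ)) = ((Real.cosh (Real.pi * x) : ℝ) : ℂ) := by
      rw [← Complex.ofReal_mul, ← Complex.ofReal_cosh]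
    have h2 : Real.pi * Complex.I * τ * (x:ℂ)^2 - 2 * Real.pi * u * (x:ℂ)
        = Real.pi * Complex.I * τ * (x:ℂ)^2 + (-(2 * Real.pi) * u) * (x:ℂ) + 0 := by ring
    rw [norm_div, hcosh, h2]
    have h1 : (1:ℝ) ≤ ‖((Real.cosh (Real.pi * x) : ℝ) : ℂ)‖ := by
      rw [Complex.norm_real, Real.norm_eq_abs, abs_of_pos (Real.cosh_pos _)]
      exact Real.one_le_cosh _
    exact div_le_self (norm_nonneg _) h1

private lemma arg_neg_I_mul {τ : ℂ} (hτ : 0 < τ.im) : (-Complex.I * τ).arg ≠ Real.pi := by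
  intro h
  rw [Complex.arg_eq_pi_iff] at h
  have : (-Complex.I * τ).re = τ.im := by simp [Complex.mul_re]
  rw [this] at h
  exact absurd h.1 (not_lt.mpr hτ.le)

private lemma mordellH_add_one (u τ : ℂ) (hτ : 0 < τ.im) :
    mordellH (u + 1) τ = -mordellH u τ
      + 2 / (-Complex.I * τ) ^ (1/2 : ℂ)
        * Complex.exp (Real.pi * Complex.I * (u + 1/2)^2 / τ) := by
  have hτ0 : τ ≠ 0 := fun h => by simp [h] at hτ
  have hb := pIt_re_neg hτ
  have key : ∀ x : ℝ,
      Complex.exp (Real.pi * Complex.I * τ * (x:ℂ)^2 - 2 * Real.pi * (u+1) * (x:ℂ))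
        / Complex.cosh (Real.pi * (x:ℂ))
      = 2 * Complex.exp (Real.pi * Complex.I * τ * (x:ℂ)^2
            + (-(2 * Real.pi) * (u + 1/2)) * (x:ℂ) + 0)
        - Complex.exp (Real.pi * Complex.I * τ * (x:ℂ)^2 - 2 * Real.pi * u * (x:ℂ))
            / Complex.cosh (Real.pi * (x:ℂ)) := by
    intro x
    set E := Complex.exp (Real.pi * Complex.I * τ * (x:ℂ)^2 - 2 * Real.pi * u * (x:ℂ)) with hE
    set P := Complex.exp ((Real.pi : ℂ) * (x:ℂ)) with hP
    set Q := Complex.exp (-((Real.pi : ℂ) * (x:ℂ))) with hQ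
    have hPQ : P * Q = 1 := by rw [hP, hQ, ← Complex.exp_add]; simp
    have e1 : Complex.exp (Real.pi * Complex.I * τ * (x:ℂ)^2 - 2 * Real.pi * (u+1) * (x:ℂ))
        = E * (Q * Q) := by
      rw [hE, hQ, ← Complex.exp_add, ← Complex.exp_add]; congr 1; ring
    have e2 : Complex.exp (Real.pi * Complex.I * τ * (x:ℂ)^2
          + (-(2 * Real.pi) * (u + 1/2)) * (x:ℂ) + 0) = E * Q := by
      rw [hE, hQ, ← Complex.exp_add]; congr 1; ring
    have e3 : Complex.cosh ((Real.pi : ℂ) * (x:ℂ)) = (P + Q) / 2 := by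
      rw [Complex.cosh, hP, hQ]
    have hc := cosh_pi_ne x
    rw [e3] at hc ⊢
    have hPQ0 : P + Q ≠ 0 := by
      intro h; exact hc (by rw [h]; simp)
    rw [e1, e2]
    field_simp
    linear_combination (-E) * hPQ
  have hI1 : Integrable (fun x : ℝ =>
      Complex.exp (Real.pi * Complex.I * τ * (x:ℂ)^2
        + (-(2 * Real.pi) * (u + 1/2)) * (x:ℂ) + 0)) :=
    integrable_cexp_quadratic' hb _ _
  have hI2 := mordell_integrable u τ hτ
  have hsplit : mordellH (u + 1) τ
      = (∫ x : ℝ, 2 * Complex.exp (Real.pi * Complex.I * τ * (x:ℂ)^2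
          + (-(2 * Real.pi) * (u + 1/2)) * (x:ℂ) + 0))
        - mordellH u τ := by
    unfold mordellH
    rw [← MeasureTheory.integral_sub (hI1.const_mul 2) hI2]
    exact MeasureTheory.integral_congr_ae (Filter.Eventually.of_forall key)
  rw [hsplit, MeasureTheory.integral_const_mul, integral_cexp_quadratic hb]
  have hgauss : ((Real.pi : ℂ) / -(Real.pi * Complex.I * τ)) ^ (1/2 : ℂ)
      = ((-Complex.I * τ) ^ (1/2 : ℂ))⁻¹ := by
    have h1 : (Real.pi : ℂ) / -(Real.pi * Complex.I * τ) = (-Complex.I * τ)⁻¹ := by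
      have : (Real.pi : ℂ) ≠ 0 := Complex.ofReal_ne_zero.mpr Real.pi_ne_zero
      field_simp
    rw [h1, Complex.inv_cpow _ _ (arg_neg_I_mul hτ)]
  have hexp : (0 : ℂ) - (-(2 * Real.pi) * (u + 1/2))^2 / (4 * (Real.pi * Complex.I * τ))
      = Real.pi * Complex.I * (u + 1/2)^2 / τ := by
    have hπ : (Real.pi : ℂ) ≠ 0 := Complex.ofReal_ne_zero.mpr Real.pi_ne_zero
    have h4 : (4:ℂ) * (Real.pi * Complex.I * τ) ≠ 0 := by
      simp [hπ, Complex.I_ne_zero, hτ0]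
    rw [zero_sub, ← neg_div, div_eq_div_iff h4 hτ0]
    linear_combination (-(4:ℂ) * (Real.pi:ℂ)^2 * (u + 1/2)^2 * τ) * Complex.I_sq
  rw [hgauss, hexp]
  ring


/-- shift of `δ_{x,y}` in `y`. -/
theorem stmt13 (x y : ℝ) (τ : ℂ) (hτ : 0 < τ.im) :
    deltaXY x (y + 1) τ
      = -Complex.exp (2 * Real.pi * Complex.I * (x:ℂ)) * deltaXY x y τ
        + (2 * Complex.exp (2 * Real.pi * Complex.I * (x:ℂ))
            / (-Complex.I * τ) ^ (1/2 : ℂ))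
          * Complex.exp (Real.pi * Complex.I * ((y:ℂ) + 1/2)^2 / τ) := by
  have hτ0 : τ ≠ 0 := fun h => by simp [h] at hτ
  set E := Complex.exp (2 * Real.pi * Complex.I * (x:ℂ)) with hEdef
  unfold deltaXY
  have hray : rayIntegral 0
        (fun z => gab (x + 1/2) ((y + 1) + 1/2) z / (-Complex.I * (z + τ)) ^ (1/2 : ℂ))
      = (-E) * rayIntegral 0
        (fun z => gab (x + 1/2) (y + 1/2) z / (-Complex.I * (z + τ)) ^ (1/2 : ℂ)) := by
    unfold rayIntegral
    rw [← MeasureTheory.integral_const_mul]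
    refine MeasureTheory.integral_congr_ae (Filter.Eventually.of_forall fun t => ?_)
    beta_reduce
    have h1 : (y + 1) + 1/2 = (y + 1/2) + 1 := by ring
    rw [h1, gab_shift (x + 1/2) (y + 1/2) (0 + (t:ℂ) * Complex.I)]
    have h2 : Complex.exp (2 * Real.pi * Complex.I * ((x + 1/2 : ℝ) : ℂ)) = -E := by
      have : 2 * (Real.pi : ℂ) * Complex.I * ((x + 1/2 : ℝ) : ℂ)
          = 2 * Real.pi * Complex.I * (x:ℂ) + Real.pi * Complex.I := by push_cast; ring
      rw [this, Complex.exp_add, Complex.exp_pi_mul_I, hEdef]; ring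
    rw [h2]; ring
  have hm : mordellH ((x:ℂ) * τ - ((y + 1 : ℝ) : ℂ)) τ
      = -mordellH ((x:ℂ) * τ - (y:ℂ)) τ
        + 2 / (-Complex.I * τ) ^ (1/2 : ℂ)
          * Complex.exp (Real.pi * Complex.I * ((x:ℂ) * τ - (y:ℂ) - 1/2)^2 / τ) := by
    have h1 := mordellH_add_one ((x:ℂ) * τ - (y:ℂ) - 1) τ hτ
    have h2 : (x:ℂ) * τ - (y:ℂ) - 1 + 1 = (x:ℂ) * τ - (y:ℂ) := by ring
    have h3 : (x:ℂ) * τ - (y:ℂ) - 1 + 1/2 = (x:ℂ) * τ - (y:ℂ) - 1/2 := by ring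
    rw [h2, h3] at h1
    have h4 : (x:ℂ) * τ - ((y + 1 : ℝ) : ℂ) = (x:ℂ) * τ - (y:ℂ) - 1 := by push_cast; ring
    rw [h4]
    linear_combination h1
  rw [hray, hm]
  have hA : ee ((x:ℂ) * (((y + 1 : ℝ) : ℂ) + 1/2)) = E * ee ((x:ℂ) * ((y:ℂ) + 1/2)) := by
    rw [hEdef]; unfold ee
    rw [← Complex.exp_add]
    congr 1
    push_cast; ring
  have hB : ee ((x:ℂ) * ((y:ℂ) + 1/2)) * ee (-((x:ℂ)^2/2) * τ)
        * Complex.exp (Real.pi * Complex.I * ((x:ℂ) * τ - (y:ℂ) - 1/2)^2 / τ)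
      = Complex.exp (Real.pi * Complex.I * ((y:ℂ) + 1/2)^2 / τ) := by
    unfold ee
    rw [← Complex.exp_add, ← Complex.exp_add]
    congr 1
    field_simp
    ring
  rw [hA]
  linear_combination (2 * E / (-Complex.I * τ) ^ (1/2 : ℂ)) * hB
end

section
/- Fix integers A, a and a positive integer C with a ∈ {0,1,2,3}, gcd(A,C) = 1, 0 < A/C < 1, and A/C ≠ 1/2 when a is odd. Then for all τ ∈ ℍ: if C is even, V_α(τ) − (−1)^{A + C/2} e(C/8) e(C(2A−C)²/(8C²)) V_α(τ + C) = 0; and if C is odd, V_α(τ) + e(C/4) e((2A−C)²/(4C)) V_α(τ + 2C) = 0. -/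
open Complex Real

lemma expPIeven (m : ℤ) (hm : Even m) :
    Complex.exp ((Real.pi:ℂ) * Complex.I * (m:ℂ)) = 1 := by
  obtain ⟨j, rfl⟩ := hm
  rw [show (Real.pi:ℂ) * Complex.I * ((j+j : ℤ):ℂ) = (j:ℂ) * (2 * Real.pi * Complex.I) by
    push_cast; ring, Complex.exp_int_mul_two_pi_mul_I]

lemma expPIint (m : ℤ) :
    Complex.exp ((Real.pi:ℂ) * Complex.I * (m:ℂ)) = (-1:ℂ)^m := by
  rw [show (Real.pi:ℂ) * Complex.I * (m:ℂ) = (m:ℂ) * (Real.pi * Complex.I) by ring,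
    Complex.exp_int_mul, Complex.exp_pi_mul_I]

lemma neg_one_zpow_mul_self (k : ℤ) : (-1:ℂ)^k * (-1:ℂ)^k = 1 := by
  rw [← zpow_add₀ (by norm_num : (-1:ℂ) ≠ 0)]
  exact Even.neg_one_zpow ⟨k, rfl⟩

lemma ee_add (x y : ℂ) : ee (x + y) = ee x * ee y := by
  unfold ee; rw [mul_add, Complex.exp_add]

lemma ee_zero : ee 0 = 1 := by simp [ee]

lemma jTheta_tau_add_int (z τ : ℂ) (k : ℤ) :
    jTheta z (τ + (k:ℂ)) = Complex.exp ((Real.pi:ℂ) * Complex.I * (k:ℂ) / 4) * jTheta z τ := by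
  unfold jTheta
  rw [← tsum_mul_left]
  refine tsum_congr fun n => ?_
  rw [show (Real.pi:ℂ) * Complex.I * ((n : ℂ) + 1/2)^2 * (τ + (k:ℂ))
      + 2 * Real.pi * Complex.I * ((n : ℂ) + 1/2) * (z + 1/2)
      = (Real.pi:ℂ) * Complex.I * (((n^2+n)*k : ℤ):ℂ)
        + ((Real.pi:ℂ) * Complex.I * (k:ℂ) / 4
          + ((Real.pi:ℂ) * Complex.I * ((n : ℂ) + 1/2)^2 * τ
            + 2 * Real.pi * Complex.I * ((n : ℂ) + 1/2) * (z + 1/2))) by push_cast; ring,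
    Complex.exp_add, Complex.exp_add,
    expPIeven _ (Even.mul_right (by simpa [sq, mul_add, mul_one] using Int.even_mul_succ_self n) k),
    one_mul]

lemma jTheta_z_add_int (z τ : ℂ) (k : ℤ) :
    jTheta (z + (k:ℂ)) τ = (-1:ℂ)^k * jTheta z τ := by
  unfold jTheta
  rw [← tsum_mul_left]
  refine tsum_congr fun n => ?_
  rw [show (Real.pi:ℂ) * Complex.I * ((n : ℂ) + 1/2)^2 * τ
      + 2 * Real.pi * Complex.I * ((n : ℂ) + 1/2) * (z + (k:ℂ) + 1/2)
      = (Real.pi:ℂ) * Complex.I * ((2*n*k : ℤ):ℂ)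
        + ((Real.pi:ℂ) * Complex.I * ((k:ℤ):ℂ)
          + ((Real.pi:ℂ) * Complex.I * ((n : ℂ) + 1/2)^2 * τ
            + 2 * Real.pi * Complex.I * ((n : ℂ) + 1/2) * (z + 1/2))) by push_cast; ring,
    Complex.exp_add, Complex.exp_add, expPIeven _ ⟨n*k, by ring⟩, one_mul, expPIint, mul_assoc]

lemma zMu_u_add_int (u v τ : ℂ) (k : ℤ) :
    zMu (u + (k:ℂ)) v τ = (-1:ℂ)^k * zMu u v τ := by
  unfold zMu
  have h1 : Complex.exp ((Real.pi:ℂ) * Complex.I * (u + (k:ℂ)))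
      = (-1:ℂ)^k * Complex.exp ((Real.pi:ℂ) * Complex.I * u) := by
    rw [mul_add, Complex.exp_add, expPIint, mul_comm]
  have h2 : Complex.exp (2 * (Real.pi:ℂ) * Complex.I * (u + (k:ℂ)))
      = Complex.exp (2 * (Real.pi:ℂ) * Complex.I * u) := by
    rw [show 2 * (Real.pi:ℂ) * Complex.I * (u + (k:ℂ))
        = (Real.pi:ℂ) * Complex.I * ((2*k : ℤ):ℂ) + 2 * (Real.pi:ℂ) * Complex.I * u by
      push_cast; ring, Complex.exp_add, expPIeven _ ⟨k, by ring⟩, one_mul]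
  rw [h1, h2]; ring

lemma zMu_v_add_int (u v τ : ℂ) (k : ℤ) :
    zMu u (v + (k:ℂ)) τ = (-1:ℂ)^k * zMu u v τ := by
  unfold zMu
  have h2 : ∀ n : ℤ, Complex.exp (2 * (Real.pi:ℂ) * Complex.I * (n:ℂ) * (v + (k:ℂ)))
      = Complex.exp (2 * (Real.pi:ℂ) * Complex.I * (n:ℂ) * v) := by
    intro n
    rw [show 2 * (Real.pi:ℂ) * Complex.I * (n:ℂ) * (v + (k:ℂ))
        = (Real.pi:ℂ) * Complex.I * ((2*n*k : ℤ):ℂ) + 2 * (Real.pi:ℂ) * Complex.I * (n:ℂ) * v by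
      push_cast; ring, Complex.exp_add, expPIeven _ ⟨n*k, by ring⟩, one_mul]
  simp only [h2, jTheta_z_add_int]
  have h3 : ((-1:ℂ)^k)⁻¹ = (-1:ℂ)^k :=
    inv_eq_of_mul_eq_one_right (neg_one_zpow_mul_self k)
  rw [div_mul_eq_div_div_swap, div_eq_mul_inv _ ((-1:ℂ)^k), h3]; ring

lemma zMu_tau_add_int (u v τ : ℂ) (k : ℤ) :
    zMu u v (τ + (k:ℂ))
      = Complex.exp (-((Real.pi:ℂ) * Complex.I * (k:ℂ) / 4)) * zMu u v τ := by
  unfold zMu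
  have h1 : ∀ n : ℤ, Complex.exp ((Real.pi:ℂ) * Complex.I * (n:ℂ) * ((n:ℂ)+1) * (τ + (k:ℂ)))
      = Complex.exp ((Real.pi:ℂ) * Complex.I * (n:ℂ) * ((n:ℂ)+1) * τ) := by
    intro n
    rw [show (Real.pi:ℂ) * Complex.I * (n:ℂ) * ((n:ℂ)+1) * (τ + (k:ℂ))
        = (Real.pi:ℂ) * Complex.I * ((n*(n+1)*k : ℤ):ℂ)
          + (Real.pi:ℂ) * Complex.I * (n:ℂ) * ((n:ℂ)+1) * τ by push_cast; ring,
      Complex.exp_add, expPIeven _ ((Int.even_mul_succ_self n).mul_right k), one_mul]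
  have h2 : ∀ n : ℤ, Complex.exp (2 * (Real.pi:ℂ) * Complex.I * (n:ℂ) * (τ + (k:ℂ)))
      = Complex.exp (2 * (Real.pi:ℂ) * Complex.I * (n:ℂ) * τ) := by
    intro n
    rw [show 2 * (Real.pi:ℂ) * Complex.I * (n:ℂ) * (τ + (k:ℂ))
        = (Real.pi:ℂ) * Complex.I * ((2*n*k : ℤ):ℂ) + 2 * (Real.pi:ℂ) * Complex.I * (n:ℂ) * τ by
      push_cast; ring, Complex.exp_add, expPIeven _ ⟨n*k, by ring⟩, one_mul]
  simp only [h1, h2, jTheta_tau_add_int]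
  rw [div_mul_eq_div_div_swap, div_eq_mul_inv _ (Complex.exp _), ← Complex.exp_neg]
  ring

/-- Key shift: `V_α(τ + 2q) = e(-B·2q) e^{-πi·2q/4} (-1)^p (-1)^q V_α(τ)` when `A·2q = pC`. -/
lemma Valpha_shift (A a p q : ℤ) (C : ℕ) (hC0 : (C:ℂ) ≠ 0)
    (hpq : A * (2*q) = p * (C:ℤ)) (τ : ℂ) :
    Valpha A C a (τ + ((2*q : ℤ):ℂ))
      = ee (-(((2*A - (C:ℤ) : ℤ) : ℂ)^2 / (8 * (C:ℂ)^2)) * ((2*q : ℤ):ℂ))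
        * Complex.exp (-((Real.pi:ℂ) * Complex.I * ((2*q : ℤ):ℂ) / 4))
        * ((-1:ℂ)^p * ((-1:ℂ)^q * Valpha A C a τ)) := by
  have hcast : (A:ℂ) * (2*(q:ℂ)) = (p:ℂ) * (C:ℂ) := by exact_mod_cast hpq
  have hu : (A : ℂ)/(C : ℂ) * (τ + ((2*q : ℤ):ℂ)) + (a : ℂ)/2
      = ((A : ℂ)/(C : ℂ) * τ + (a : ℂ)/2) + ((p:ℤ):ℂ) := by
    field_simp
    push_cast
    linear_combination 2 * hcast
  have hv : (τ + ((2*q : ℤ):ℂ))/2 = τ/2 + ((q:ℤ):ℂ) := by push_cast; ring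
  unfold Valpha
  rw [hu, hv, zMu_tau_add_int, zMu_u_add_int, zMu_v_add_int,
    show -(((2*A - (C:ℤ) : ℤ) : ℂ)^2 / (8 * (C:ℂ)^2)) * (τ + ((2*q : ℤ):ℂ))
      = -(((2*A - (C:ℤ) : ℤ) : ℂ)^2 / (8 * (C:ℂ)^2)) * τ
        + -(((2*A - (C:ℤ) : ℤ) : ℂ)^2 / (8 * (C:ℂ)^2)) * ((2*q : ℤ):ℂ) by ring, ee_add]
  ring


/-- the `T`-transformations of `V_α`, for `C` even and `C` odd. -/
theorem stmt19 (A a : ℤ) (C : ℕ) (hC : 0 < C)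
    (ha : a = 0 ∨ a = 1 ∨ a = 2 ∨ a = 3) (hgcd : Int.gcd A (C:ℤ) = 1)
    (hpos : 0 < (A:ℚ)/(C:ℚ)) (hlt : (A:ℚ)/(C:ℚ) < 1)
    (hhalf : Odd a → (A:ℚ)/(C:ℚ) ≠ 1/2) :
    (Even C → ∀ τ : ℂ, 0 < τ.im →
      Valpha A C a τ
        - (-1 : ℂ)^(A + (C:ℤ)/2) * ee ((C:ℂ)/8)
          * ee ((C:ℂ) * ((2*A - (C:ℤ) : ℤ):ℂ)^2 / (8 * (C:ℂ)^2))
          * Valpha A C a (τ + (C:ℂ)) = 0) ∧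
    (Odd C → ∀ τ : ℂ, 0 < τ.im →
      Valpha A C a τ
        + ee ((C:ℂ)/4) * ee (((2*A - (C:ℤ) : ℤ):ℂ)^2 / (4 * (C:ℂ)))
          * Valpha A C a (τ + 2*(C:ℂ)) = 0) := by
  have hC0 : (C:ℂ) ≠ 0 := Nat.cast_ne_zero.mpr hC.ne'
  constructor
  · rintro ⟨m, hm⟩ τ _
    subst hm
    have hm0 : (0:ℕ) < m := by omega
    rw [sub_eq_zero, show τ + ((m+m : ℕ):ℂ) = τ + ((2*(m:ℤ) : ℤ):ℂ) by push_cast; ring,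
      Valpha_shift A a A (m:ℤ) (m+m) hC0 (by push_cast; ring) τ,
      show (A + ((m+m : ℕ):ℤ)/2) = A + (m:ℤ) by omega]
    have e1 : ee (((m+m : ℕ):ℂ) * ((2*A - ((m+m:ℕ):ℤ) : ℤ):ℂ)^2 / (8 * ((m+m:ℕ):ℂ)^2))
        * ee (-(((2*A - ((m+m:ℕ):ℤ) : ℤ) : ℂ)^2 / (8 * ((m+m:ℕ):ℂ)^2)) * ((2*(m:ℤ) : ℤ):ℂ))
        = 1 := by
      rw [← ee_add, show ((m+m : ℕ):ℂ) * ((2*A - ((m+m:ℕ):ℤ) : ℤ):ℂ)^2 / (8 * ((m+m:ℕ):ℂ)^2)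
        + -(((2*A - ((m+m:ℕ):ℤ) : ℤ) : ℂ)^2 / (8 * ((m+m:ℕ):ℂ)^2)) * ((2*(m:ℤ) : ℤ):ℂ)
        = 0 by push_cast; ring, ee_zero]
    have e2 : ee (((m+m : ℕ):ℂ)/8)
        * Complex.exp (-((Real.pi:ℂ) * Complex.I * ((2*(m:ℤ) : ℤ):ℂ) / 4)) = 1 := by
      rw [show ee (((m+m : ℕ):ℂ)/8)
        = Complex.exp (2 * (Real.pi:ℂ) * Complex.I * (((m+m : ℕ):ℂ)/8)) from rfl,
        ← Complex.exp_add, show 2 * (Real.pi:ℂ) * Complex.I * (((m+m : ℕ):ℂ)/8)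
          + -((Real.pi:ℂ) * Complex.I * ((2*(m:ℤ) : ℤ):ℂ) / 4) = 0 by push_cast; ring,
        Complex.exp_zero]
    have e3 : (-1:ℂ)^(A + (m:ℤ)) * ((-1:ℂ)^A * (-1:ℂ)^((m:ℤ))) = 1 := by
      rw [zpow_add₀ (by norm_num : (-1:ℂ) ≠ 0), mul_mul_mul_comm,
        neg_one_zpow_mul_self, neg_one_zpow_mul_self, mul_one]
    calc Valpha A (m+m) a τ
        = ((-1:ℂ)^(A + (m:ℤ)) * ((-1:ℂ)^A * (-1:ℂ)^((m:ℤ))))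
          * ((ee (((m+m : ℕ):ℂ)/8)
              * Complex.exp (-((Real.pi:ℂ) * Complex.I * ((2*(m:ℤ) : ℤ):ℂ) / 4)))
            * ((ee (((m+m : ℕ):ℂ) * ((2*A - ((m+m:ℕ):ℤ) : ℤ):ℂ)^2 / (8 * ((m+m:ℕ):ℂ)^2))
               * ee (-(((2*A - ((m+m:ℕ):ℤ) : ℤ) : ℂ)^2 / (8 * ((m+m:ℕ):ℂ)^2))
                   * ((2*(m:ℤ) : ℤ):ℂ)))
              * Valpha A (m+m) a τ)) := by rw [e1, e2, e3]; ring
      _ = _ := by ring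
  · rintro hodd τ _
    rw [add_comm, ← neg_eq_iff_add_eq_zero, ← neg_mul,
      show τ + 2*(C:ℂ) = τ + ((2*(C:ℤ) : ℤ):ℂ) by push_cast; ring,
      Valpha_shift A a (2*A) (C:ℤ) C hC0 (by ring) τ]
    have e1 : ee (((2*A - (C:ℤ) : ℤ):ℂ)^2 / (4 * (C:ℂ)))
        * ee (-(((2*A - (C:ℤ) : ℤ) : ℂ)^2 / (8 * (C:ℂ)^2)) * ((2*(C:ℤ) : ℤ):ℂ)) = 1 := by
      rw [← ee_add, show ((2*A - (C:ℤ) : ℤ):ℂ)^2 / (4 * (C:ℂ))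
        + -(((2*A - (C:ℤ) : ℤ) : ℂ)^2 / (8 * (C:ℂ)^2)) * ((2*(C:ℤ) : ℤ):ℂ) = 0 by
          push_cast; field_simp; ring, ee_zero]
    have e2 : ee ((C:ℂ)/4)
        * Complex.exp (-((Real.pi:ℂ) * Complex.I * ((2*(C:ℤ) : ℤ):ℂ) / 4)) = 1 := by
      rw [show ee ((C:ℂ)/4)
        = Complex.exp (2 * (Real.pi:ℂ) * Complex.I * ((C:ℂ)/4)) from rfl,
        ← Complex.exp_add, show 2 * (Real.pi:ℂ) * Complex.I * ((C:ℂ)/4)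
          + -((Real.pi:ℂ) * Complex.I * ((2*(C:ℤ) : ℤ):ℂ) / 4) = 0 by push_cast; ring,
        Complex.exp_zero]
    have e3 : (-1:ℂ)^(2*A) * (-1:ℂ)^((C:ℤ)) = -1 := by
      rw [Even.neg_one_zpow ⟨A, by ring⟩, one_mul, zpow_natCast, hodd.neg_one_pow]
    calc _ = -(((-1:ℂ)^(2*A) * (-1:ℂ)^((C:ℤ)))
          * ((ee ((C:ℂ)/4)
              * Complex.exp (-((Real.pi:ℂ) * Complex.I * ((2*(C:ℤ) : ℤ):ℂ) / 4)))
            * ((ee (((2*A - (C:ℤ) : ℤ):ℂ)^2 / (4 * (C:ℂ)))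
               * ee (-(((2*A - (C:ℤ) : ℤ) : ℂ)^2 / (8 * (C:ℂ)^2)) * ((2*(C:ℤ) : ℤ):ℂ)))
              * Valpha A C a τ))) := by ring
      _ = _ := by rw [e1, e2, e3]; ring
end
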